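/- arXiv:0808.1616 — 3 statements merged into one kernel-verified Lean document; each statement's English description precedes it below -/
import Mathlib

section
/- Let c > 0. There exists a constant C = C(c) > 0 such that for every real H ≥ 1 and every Lebesgue measurable set 𝒮 ⊆ [−c,c]², the functions w₊ and w₋ satisfy: (i) 0 ≤ w₊(x) ≤ 1 and 0 ≤ w₋(x) ≤ 1 for all x ∈ ℝ²; (ii) w₊(x) ≥ 1 − C·e^{−H} for every x ∈ 𝒮; (iii) w₋(x) ≤ C·e^{−H} for every x ∉ 𝒮; (iv) w₋(x) ≤ C·exp(−‖x‖²H²/5) for every x ∈ ℝ² with ‖x‖ ≥ 4c, where ‖·‖ is the Euclidean norm. -/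
open MeasureTheory

/-- `S₊`: the union of closed balls of radius `1/√H` centred at points of `S`. -/
noncomputable def Splus (H : ℝ) (S : Set (EuclideanSpace ℝ (Fin 2))) :
    Set (EuclideanSpace ℝ (Fin 2)) :=
  ⋃ x ∈ S, Metric.closedBall x (1 / Real.sqrt H)

/-- `S₋`: the complement of the union of closed balls of radius `1/√H` centred
at points not in `S`. -/
noncomputable def Sminus (H : ℝ) (S : Set (EuclideanSpace ℝ (Fin 2))) :
    Set (EuclideanSpace ℝ (Fin 2)) :=
  (⋃ x ∈ Sᶜ, Metric.closedBall x (1 / Real.sqrt H))ᶜ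

/-- The smoothed weight `w₊`. -/
noncomputable def wplus (H : ℝ) (S : Set (EuclideanSpace ℝ (Fin 2)))
    (x : EuclideanSpace ℝ (Fin 2)) : ℝ :=
  H ^ 2 / Real.pi * ∫ y in Splus H S, Real.exp (-(‖y - x‖ ^ 2 * H ^ 2))

/-- The smoothed weight `w₋`. -/
noncomputable def wminus (H : ℝ) (S : Set (EuclideanSpace ℝ (Fin 2)))
    (x : EuclideanSpace ℝ (Fin 2)) : ℝ :=
  H ^ 2 / Real.pi * ∫ y in Sminus H S, Real.exp (-(‖y - x‖ ^ 2 * H ^ 2))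

section WeightAux

open Real Set

lemma oneD (b a : ℝ) (hb : 0 < b) :
    ∫ x in Set.Ioi a, x * Real.exp (-(x ^ 2 * b)) = Real.exp (-(a ^ 2 * b)) / (2 * b) := by
  have hderiv : ∀ r ∈ Set.Ici a, HasDerivAt (fun r : ℝ => -(1 / (2 * b)) * Real.exp (-(r ^ 2 * b)))
      (r * Real.exp (-(r ^ 2 * b))) r := by
    intro r _
    have h1 : HasDerivAt (fun r : ℝ => -(r ^ 2 * b)) (-(2 * r * b)) r := by
      simpa using (((hasDerivAt_pow 2 r).mul_const b).fun_neg)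
    have h2 := (h1.exp).const_mul (-(1 / (2 * b)))
    refine h2.congr_deriv ?_
    field_simp
  have hint : IntegrableOn (fun x : ℝ => x * Real.exp (-(x ^ 2 * b))) (Set.Ioi a) := by
    have := (integrable_mul_exp_neg_mul_sq hb).integrableOn (s := Set.Ioi a)
    refine this.congr_fun (fun x _ => by ring_nf) measurableSet_Ioi
  have htend : Filter.Tendsto (fun r : ℝ => -(1 / (2 * b)) * Real.exp (-(r ^ 2 * b)))
      Filter.atTop (nhds 0) := by
    have h1 : Filter.Tendsto (fun r : ℝ => -(r ^ 2 * b)) Filter.atTop Filter.atBot := by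
      apply Filter.tendsto_neg_atBot_iff.mpr
      exact Filter.Tendsto.atTop_mul_const hb (Filter.tendsto_pow_atTop (by norm_num))
    have := (Real.tendsto_exp_atBot.comp h1).const_mul (-(1 / (2 * b)))
    simpa using this
  have := integral_Ioi_of_hasDerivAt_of_tendsto' hderiv hint htend
  rw [this]
  field_simp
  ring

lemma tail_complex (b a : ℝ) (hb : 0 < b) (ha : 0 ≤ a) :
    ∫ z in {z : ℂ | a < ‖z‖}, Real.exp (-(‖z‖ ^ 2 * b))
      = Real.pi / b * Real.exp (-(a ^ 2 * b)) := by
  have hA : MeasurableSet {z : ℂ | a < ‖z‖} :=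
    measurableSet_lt measurable_const measurable_norm
  have key := Complex.integral_comp_polarCoord_symm
    (f := ({z : ℂ | a < ‖z‖}).indicator fun z => Real.exp (-(‖z‖ ^ 2 * b)))
  rw [← integral_indicator hA, ← key]
  have hB : MeasurableSet {p : ℝ × ℝ | a < |p.1|} :=
    measurableSet_lt measurable_const (measurable_fst.abs)
  have heq : ∀ p : ℝ × ℝ,
      p.1 • ({z : ℂ | a < ‖z‖}).indicator (fun z => Real.exp (-(‖z‖ ^ 2 * b)))
        (Complex.polarCoord.symm p)
      = ({p : ℝ × ℝ | a < |p.1|}).indicator (fun p => p.1 * Real.exp (-(p.1 ^ 2 * b))) p := by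
    intro p
    have hnorm : ‖Complex.polarCoord.symm p‖ = |p.1| := by
      rw [Complex.norm_polarCoord_symm]
    by_cases hp : a < |p.1|
    · rw [Set.indicator_of_mem (by simpa [hnorm] using hp),
        Set.indicator_of_mem (by exact hp)]
      rw [hnorm, smul_eq_mul, sq_abs]
    · rw [Set.indicator_of_notMem (by simpa [hnorm] using hp),
        Set.indicator_of_notMem (by exact hp), smul_zero]
  simp_rw [heq]
  rw [setIntegral_indicator hB]
  have hset : polarCoord.target ∩ {p : ℝ × ℝ | a < |p.1|}
      = Set.Ioi a ×ˢ Set.Ioo (-Real.pi) Real.pi := by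
    have htarget : polarCoord.target = Set.Ioi (0:ℝ) ×ˢ Set.Ioo (-Real.pi) Real.pi := rfl
    rw [htarget]
    ext p
    simp only [Set.mem_inter_iff, Set.mem_prod, Set.mem_Ioi, Set.mem_Ioo, Set.mem_setOf_eq]
    constructor
    · rintro ⟨⟨h1, h2⟩, h3⟩
      exact ⟨by rwa [abs_of_pos h1] at h3, h2⟩
    · rintro ⟨h1, h2⟩
      have h0 : 0 < p.1 := lt_of_le_of_lt ha h1
      exact ⟨⟨h0, h2⟩, by rwa [abs_of_pos h0]⟩
  rw [hset, Measure.volume_eq_prod]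
  have := setIntegral_prod_mul (μ := (volume : Measure ℝ)) (ν := (volume : Measure ℝ)) (L := ℝ) (fun x => x * Real.exp (-(x ^ 2 * b)))
    (fun _ => (1 : ℝ)) (Set.Ioi a) (Set.Ioo (-Real.pi) Real.pi)
  simp only [mul_one] at this
  rw [this, oneD b a hb]
  rw [setIntegral_const, Real.volume_real_Ioo_of_le (by linarith [Real.pi_pos]), smul_eq_mul, mul_one]
  field_simp
  ring

lemma gauss_integrable0 (b : ℝ) (hb : 0 < b) :
    Integrable (fun y : EuclideanSpace ℝ (Fin 2) => Real.exp (-(‖y‖ ^ 2 * b))) := by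
  have h := (GaussianFourier.integrable_cexp_neg_mul_sq_norm_add
    (V := EuclideanSpace ℝ (Fin 2)) (b := (b : ℂ)) (by simpa using hb) 0 0).norm
  refine h.congr (Filter.Eventually.of_forall fun y => ?_)
  simp [Complex.norm_exp]
  rw [← Complex.ofReal_pow, Complex.ofReal_re]
  ring_nf

lemma gauss_total0 (b : ℝ) (hb : 0 < b) :
    ∫ y : EuclideanSpace ℝ (Fin 2), Real.exp (-(‖y‖ ^ 2 * b)) = Real.pi / b := by
  have h := GaussianFourier.integral_rexp_neg_mul_sq_norm (V := EuclideanSpace ℝ (Fin 2)) hb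
  rw [finrank_euclideanSpace_fin] at h
  norm_num at h
  rw [← h]
  congr 1 with y
  ring_nf

lemma gauss_tail0 (b a : ℝ) (hb : 0 < b) (ha : 0 ≤ a) :
    ∫ y in {y : EuclideanSpace ℝ (Fin 2) | a < ‖y‖}, Real.exp (-(‖y‖ ^ 2 * b))
      = Real.pi / b * Real.exp (-(a ^ 2 * b)) := by
  let e := Complex.orthonormalBasisOneI.repr
  have hmp : MeasurePreserving e volume volume := e.measurePreserving
  have hemb : MeasurableEmbedding e := e.toHomeomorph.measurableEmbedding
  have key := hmp.setIntegral_preimage_emb hemb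
    (fun y : EuclideanSpace ℝ (Fin 2) => Real.exp (-(‖y‖ ^ 2 * b)))
    {y : EuclideanSpace ℝ (Fin 2) | a < ‖y‖}
  rw [← key]
  have hpre : (e ⁻¹' {y : EuclideanSpace ℝ (Fin 2) | a < ‖y‖}) = {z : ℂ | a < ‖z‖} := by
    ext z
    simp only [Set.mem_preimage, Set.mem_setOf_eq, LinearIsometryEquiv.norm_map]
  rw [hpre] at key ⊢
  calc ∫ z in {z : ℂ | a < ‖z‖}, Real.exp (-(‖e z‖ ^ 2 * b))
      = ∫ z in {z : ℂ | a < ‖z‖}, Real.exp (-(‖z‖ ^ 2 * b)) := by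
        congr 1 with z; rw [e.norm_map]
    _ = Real.pi / b * Real.exp (-(a ^ 2 * b)) := tail_complex b a hb ha

lemma gauss_integrable (b : ℝ) (hb : 0 < b) (x : EuclideanSpace ℝ (Fin 2)) :
    Integrable (fun y : EuclideanSpace ℝ (Fin 2) => Real.exp (-(‖y - x‖ ^ 2 * b))) := by
  have hmp : MeasurePreserving (fun y : EuclideanSpace ℝ (Fin 2) => y - x) volume volume :=
    measurePreserving_sub_right volume x
  have hemb : MeasurableEmbedding (fun y : EuclideanSpace ℝ (Fin 2) => y - x) :=
    (MeasurableEquiv.subRight x).measurableEmbedding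
  exact (hmp.integrable_comp_emb hemb).mpr (gauss_integrable0 b hb)

lemma gauss_total (b : ℝ) (hb : 0 < b) (x : EuclideanSpace ℝ (Fin 2)) :
    ∫ y : EuclideanSpace ℝ (Fin 2), Real.exp (-(‖y - x‖ ^ 2 * b)) = Real.pi / b := by
  have hmp : MeasurePreserving (fun y : EuclideanSpace ℝ (Fin 2) => y - x) volume volume :=
    measurePreserving_sub_right volume x
  have hemb : MeasurableEmbedding (fun y : EuclideanSpace ℝ (Fin 2) => y - x) :=
    (MeasurableEquiv.subRight x).measurableEmbedding
  have := hmp.integral_comp hemb (fun y : EuclideanSpace ℝ (Fin 2) => Real.exp (-(‖y‖ ^ 2 * b)))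
  rw [this, gauss_total0 b hb]

lemma gauss_tail (b a : ℝ) (hb : 0 < b) (ha : 0 ≤ a) (x : EuclideanSpace ℝ (Fin 2)) :
    ∫ y in (Metric.closedBall x a)ᶜ, Real.exp (-(‖y - x‖ ^ 2 * b))
      = Real.pi / b * Real.exp (-(a ^ 2 * b)) := by
  have hmp : MeasurePreserving (fun y : EuclideanSpace ℝ (Fin 2) => y - x) volume volume :=
    measurePreserving_sub_right volume x
  have hemb : MeasurableEmbedding (fun y : EuclideanSpace ℝ (Fin 2) => y - x) :=
    (MeasurableEquiv.subRight x).measurableEmbedding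
  have key := hmp.setIntegral_preimage_emb hemb
    (fun y : EuclideanSpace ℝ (Fin 2) => Real.exp (-(‖y‖ ^ 2 * b)))
    {y : EuclideanSpace ℝ (Fin 2) | a < ‖y‖}
  have hpre : ((fun y : EuclideanSpace ℝ (Fin 2) => y - x) ⁻¹'
      {y : EuclideanSpace ℝ (Fin 2) | a < ‖y‖}) = (Metric.closedBall x a)ᶜ := by
    ext y
    simp only [Set.mem_preimage, Set.mem_setOf_eq, Set.mem_compl_iff, Metric.mem_closedBall,
      not_le, dist_eq_norm]
  rw [hpre] at key
  rw [← gauss_tail0 b a hb ha, ← key]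

end WeightAux

set_option maxHeartbeats 1000000 in
theorem weight_function_properties (c : ℝ) (hc : 0 < c) :
    ∃ C : ℝ, 0 < C ∧ ∀ H : ℝ, 1 ≤ H → ∀ S : Set (EuclideanSpace ℝ (Fin 2)),
      MeasurableSet S → (∀ y ∈ S, ∀ i, |y i| ≤ c) →
      (∀ x, 0 ≤ wplus H S x ∧ wplus H S x ≤ 1 ∧
        0 ≤ wminus H S x ∧ wminus H S x ≤ 1) ∧
      (∀ x ∈ S, 1 - C * Real.exp (-H) ≤ wplus H S x) ∧
      (∀ x ∉ S, wminus H S x ≤ C * Real.exp (-H)) ∧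
      (∀ x : EuclideanSpace ℝ (Fin 2), 4 * c ≤ ‖x‖ →
        wminus H S x ≤ C * Real.exp (-(‖x‖ ^ 2 * H ^ 2 / 5))) := by
  have hπ := Real.pi_pos
  set V : ℝ := (volume (Metric.closedBall (0 : EuclideanSpace ℝ (Fin 2)) (2 * c))).toReal with hVdef
  have hV0 : 0 ≤ V := ENNReal.toReal_nonneg
  set C : ℝ := 1 + V * 5 / (4 * c ^ 2 * Real.pi) with hCdef
  have hC1 : 1 ≤ C := by
    rw [hCdef]
    have : 0 ≤ V * 5 / (4 * c ^ 2 * Real.pi) := by positivity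
    linarith
  refine ⟨C, by linarith, ?_⟩
  intro H hH S hS hSc
  have hH0 : (0 : ℝ) < H := lt_of_lt_of_le one_pos hH
  have hb : (0 : ℝ) < H ^ 2 := by positivity
  set r : ℝ := 1 / Real.sqrt H with hrdef
  have hsq : (0 : ℝ) < Real.sqrt H := Real.sqrt_pos.mpr hH0
  have hr0 : 0 < r := by positivity
  have hr2 : r ^ 2 * H ^ 2 = H := by
    rw [hrdef, div_pow, one_pow, Real.sq_sqrt hH0.le]
    field_simp
  have hint : ∀ x, Integrable
      (fun y : EuclideanSpace ℝ (Fin 2) => Real.exp (-(‖y - x‖ ^ 2 * H ^ 2))) :=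
    fun x => gauss_integrable _ hb x
  have hnnae : ∀ (x : EuclideanSpace ℝ (Fin 2)) (μ : Measure (EuclideanSpace ℝ (Fin 2))),
      0 ≤ᵐ[μ] fun y => Real.exp (-(‖y - x‖ ^ 2 * H ^ 2)) :=
    fun x μ => Filter.Eventually.of_forall fun y => (Real.exp_pos _).le
  -- generic bounds for any set
  have key : ∀ (x : EuclideanSpace ℝ (Fin 2)) (A : Set (EuclideanSpace ℝ (Fin 2))),
      0 ≤ H ^ 2 / Real.pi * ∫ y in A, Real.exp (-(‖y - x‖ ^ 2 * H ^ 2)) ∧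
      H ^ 2 / Real.pi * (∫ y in A, Real.exp (-(‖y - x‖ ^ 2 * H ^ 2))) ≤ 1 := by
    intro x A
    have h1 : 0 ≤ ∫ y in A, Real.exp (-(‖y - x‖ ^ 2 * H ^ 2)) :=
      integral_nonneg fun y => (Real.exp_pos _).le
    have h2 : (∫ y in A, Real.exp (-(‖y - x‖ ^ 2 * H ^ 2)))
        ≤ ∫ y, Real.exp (-(‖y - x‖ ^ 2 * H ^ 2)) :=
      integral_mono_measure Measure.restrict_le_self (hnnae x _) (hint x)
    refine ⟨mul_nonneg (by positivity) h1, ?_⟩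
    have h3 := h2.trans_eq (gauss_total _ hb x)
    calc H ^ 2 / Real.pi * (∫ y in A, Real.exp (-(‖y - x‖ ^ 2 * H ^ 2)))
        ≤ H ^ 2 / Real.pi * (Real.pi / H ^ 2) :=
          mul_le_mul_of_nonneg_left h3 (by positivity)
      _ = 1 := by field_simp
  refine ⟨?_, ?_, ?_, ?_⟩
  · -- (i)
    intro x
    exact ⟨(key x _).1, (key x _).2, (key x _).1, (key x _).2⟩
  · -- (ii)
    intro x hx
    have hball : Metric.closedBall x r ⊆ Splus H S := fun z hz => Set.mem_biUnion hx hz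
    have h1 : (∫ y in Metric.closedBall x r, Real.exp (-(‖y - x‖ ^ 2 * H ^ 2)))
        ≤ ∫ y in Splus H S, Real.exp (-(‖y - x‖ ^ 2 * H ^ 2)) :=
      setIntegral_mono_set ((hint x).integrableOn) (hnnae x _)
        (HasSubset.Subset.eventuallyLE hball)
    have htail := gauss_tail (H ^ 2) r hb hr0.le x
    rw [hr2] at htail
    have hadd := integral_add_compl (measurableSet_closedBall
      (x := x) (ε := r)) (hint x)
    have htot := gauss_total (H ^ 2) hb x
    have h2 : (∫ y in Metric.closedBall x r, Real.exp (-(‖y - x‖ ^ 2 * H ^ 2)))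
        = Real.pi / H ^ 2 - Real.pi / H ^ 2 * Real.exp (-H) := by
      rw [htail] at hadd
      rw [htot] at hadd
      linarith
    have h3 : H ^ 2 / Real.pi * (Real.pi / H ^ 2 - Real.pi / H ^ 2 * Real.exp (-H))
        = 1 - Real.exp (-H) := by
      field_simp
    have h4 : 1 - C * Real.exp (-H) ≤ 1 - Real.exp (-H) := by
      have := (Real.exp_pos (-H)).le
      nlinarith
    calc 1 - C * Real.exp (-H) ≤ 1 - Real.exp (-H) := h4
      _ = H ^ 2 / Real.pi * (∫ y in Metric.closedBall x r,
            Real.exp (-(‖y - x‖ ^ 2 * H ^ 2))) := by rw [h2, h3]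
      _ ≤ wplus H S x := by
          rw [wplus]
          exact mul_le_mul_of_nonneg_left h1 (by positivity)
  · -- (iii)
    intro x hx
    have hsub : Sminus H S ⊆ (Metric.closedBall x r)ᶜ := by
      intro z hz hzball
      exact hz (Set.mem_biUnion (Set.mem_compl hx) hzball)
    have h1 : (∫ y in Sminus H S, Real.exp (-(‖y - x‖ ^ 2 * H ^ 2)))
        ≤ ∫ y in (Metric.closedBall x r)ᶜ, Real.exp (-(‖y - x‖ ^ 2 * H ^ 2)) :=
      setIntegral_mono_set ((hint x).integrableOn) (hnnae x _)
        (HasSubset.Subset.eventuallyLE hsub)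
    have htail := gauss_tail (H ^ 2) r hb hr0.le x
    rw [hr2] at htail
    calc wminus H S x ≤ H ^ 2 / Real.pi * (Real.pi / H ^ 2 * Real.exp (-H)) := by
          rw [wminus]
          exact mul_le_mul_of_nonneg_left (h1.trans_eq htail) (by positivity)
      _ = Real.exp (-H) := by field_simp
      _ ≤ C * Real.exp (-H) := by nlinarith [(Real.exp_pos (-H)).le]
  · -- (iv)
    intro x hx
    set D : Set (EuclideanSpace ℝ (Fin 2)) := Metric.closedBall 0 (2 * c) with hDdef
    have hsubS : Sminus H S ⊆ S := by
      intro z hz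
      by_contra hzS
      exact hz (Set.mem_biUnion hzS (Metric.mem_closedBall_self hr0.le))
    have hSD : S ⊆ D := by
      intro z hzS
      have h1 := hSc z hzS
      have hz2 : ‖z‖ ^ 2 ≤ 2 * c ^ 2 := by
        rw [EuclideanSpace.norm_eq, Real.sq_sqrt (by positivity)]
        rw [Fin.sum_univ_two]
        have e0 : ‖z 0‖ ^ 2 ≤ c ^ 2 := by
          rw [Real.norm_eq_abs, ← sq_abs c]
          exact pow_le_pow_left₀ (abs_nonneg _) ((h1 0).trans (le_abs_self c)) 2
        have e1 : ‖z 1‖ ^ 2 ≤ c ^ 2 := by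
          rw [Real.norm_eq_abs, ← sq_abs c]
          exact pow_le_pow_left₀ (abs_nonneg _) ((h1 1).trans (le_abs_self c)) 2
        linarith
      rw [hDdef, Metric.mem_closedBall, dist_zero_right]
      nlinarith [norm_nonneg z]
    have hsub : Sminus H S ⊆ D := hsubS.trans hSD
    set M : ℝ := Real.exp (-(‖x‖ ^ 2 / 4 * H ^ 2)) with hMdef
    have h1 : (∫ y in Sminus H S, Real.exp (-(‖y - x‖ ^ 2 * H ^ 2)))
        ≤ ∫ y in D, Real.exp (-(‖y - x‖ ^ 2 * H ^ 2)) :=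
      setIntegral_mono_set ((hint x).integrableOn) (hnnae x _)
        (HasSubset.Subset.eventuallyLE hsub)
    have h2 : (∫ y in D, Real.exp (-(‖y - x‖ ^ 2 * H ^ 2))) ≤ ∫ _y in D, M := by
      refine setIntegral_mono_on ((hint x).integrableOn)
        ((integrableOn_const_iff (C := M)).mpr (Or.inr ?_)) measurableSet_closedBall ?_
      · exact measure_closedBall_lt_top
      · intro y hy
        have hy2 : ‖y‖ ≤ 2 * c := by
          rw [hDdef, Metric.mem_closedBall, dist_zero_right] at hy
          exact hy
        have hyx : ‖x‖ / 2 ≤ ‖y - x‖ := by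
          have h5 : ‖x‖ - ‖y‖ ≤ ‖x - y‖ := norm_sub_norm_le x y
          rw [norm_sub_rev] at h5
          linarith
        have h6 : ‖x‖ ^ 2 / 4 ≤ ‖y - x‖ ^ 2 := by nlinarith [norm_nonneg x]
        rw [hMdef]
        apply Real.exp_le_exp.mpr
        nlinarith [sq_nonneg H]
    have h3 : (∫ _y in D, M) = V * M := by
      rw [setIntegral_const, smul_eq_mul, hVdef, measureReal_def]
    have hchain : (∫ y in Sminus H S, Real.exp (-(‖y - x‖ ^ 2 * H ^ 2))) ≤ V * M :=
      h1.trans (h2.trans_eq h3)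
    have hsplit : M = Real.exp (-(‖x‖ ^ 2 * H ^ 2 / 20)) * Real.exp (-(‖x‖ ^ 2 * H ^ 2 / 5)) := by
      rw [hMdef, ← Real.exp_add]
      ring_nf
    have hxc : 16 * c ^ 2 ≤ ‖x‖ ^ 2 := by nlinarith [norm_nonneg x]
    have h7 : H ^ 2 * Real.exp (-(‖x‖ ^ 2 * H ^ 2 / 20)) ≤ 5 / (4 * c ^ 2) := by
      have h8 : Real.exp (-(‖x‖ ^ 2 * H ^ 2 / 20)) ≤ Real.exp (-(4 * c ^ 2 * H ^ 2 / 5)) := by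
        apply Real.exp_le_exp.mpr
        nlinarith [sq_nonneg H]
      have h10 : (4 * c ^ 2 * H ^ 2 / 5) * Real.exp (-(4 * c ^ 2 * H ^ 2 / 5)) ≤ 1 := by
        set u : ℝ := 4 * c ^ 2 * H ^ 2 / 5 with hu
        have h11 := Real.add_one_le_exp u
        have h12 := Real.exp_pos u
        have h13 : Real.exp (-u) * Real.exp u = 1 := by
          rw [← Real.exp_add]; simp
        nlinarith [Real.exp_pos (-u)]
      have h9 : H ^ 2 * Real.exp (-(4 * c ^ 2 * H ^ 2 / 5)) ≤ 5 / (4 * c ^ 2) := by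
        have hq : H ^ 2 * Real.exp (-(4 * c ^ 2 * H ^ 2 / 5))
            = 5 / (4 * c ^ 2) * ((4 * c ^ 2 * H ^ 2 / 5) *
              Real.exp (-(4 * c ^ 2 * H ^ 2 / 5))) := by
          field_simp
        rw [hq]
        calc 5 / (4 * c ^ 2) * ((4 * c ^ 2 * H ^ 2 / 5) *
              Real.exp (-(4 * c ^ 2 * H ^ 2 / 5)))
            ≤ 5 / (4 * c ^ 2) * 1 := mul_le_mul_of_nonneg_left h10 (by positivity)
          _ = 5 / (4 * c ^ 2) := mul_one _
      calc H ^ 2 * Real.exp (-(‖x‖ ^ 2 * H ^ 2 / 20))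
          ≤ H ^ 2 * Real.exp (-(4 * c ^ 2 * H ^ 2 / 5)) :=
            mul_le_mul_of_nonneg_left h8 (by positivity)
        _ ≤ 5 / (4 * c ^ 2) := h9
    calc wminus H S x ≤ H ^ 2 / Real.pi * (V * M) := by
          rw [wminus]
          exact mul_le_mul_of_nonneg_left hchain (by positivity)
      _ = V / Real.pi * (H ^ 2 * Real.exp (-(‖x‖ ^ 2 * H ^ 2 / 20)))
            * Real.exp (-(‖x‖ ^ 2 * H ^ 2 / 5)) := by
          rw [hsplit]; ring
      _ ≤ V / Real.pi * (5 / (4 * c ^ 2)) * Real.exp (-(‖x‖ ^ 2 * H ^ 2 / 5)) := by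
          refine mul_le_mul_of_nonneg_right ?_ (Real.exp_pos _).le
          exact mul_le_mul_of_nonneg_left h7 (by positivity)
      _ ≤ C * Real.exp (-(‖x‖ ^ 2 * H ^ 2 / 5)) := by
          refine mul_le_mul_of_nonneg_right ?_ (Real.exp_pos _).le
          have heq : V / Real.pi * (5 / (4 * c ^ 2)) = V * 5 / (4 * c ^ 2 * Real.pi) := by
            rw [div_mul_div_comm]; ring_nf
          rw [heq, hCdef]
          linarith
end

section
/- Let p be an odd prime, let c, d be integers with p ∤ c·d, and let n ≥ 1. Then the number of triples (x, y, z) ∈ (ℤ/p^nℤ)³ such that x and y are not both divisible by p and c·x² + d·y² ≡ 2z² (mod p^n) equals p^{2n} − p^{2n−2}. -/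
open Finset

section QuadCount
variable {F : Type*} [Field F] [Fintype F] [DecidableEq F]

lemma card_sq_eq (hF : ringChar F ≠ 2) (a : F) :
    ((univ.filter fun x : F => x ^ 2 = a).card : ℤ) = quadraticChar F a + 1 := by
  have := quadraticChar_card_sqrts hF a
  rwa [Set.toFinset_setOf] at this

lemma sum_sq_eq (hF : ringChar F ≠ 2) (G : F → ℤ) :
    ∑ x : F, G (x ^ 2) = ∑ u : F, ((quadraticChar F u : ℤ) + 1) * G u := by
  rw [← Finset.sum_fiberwise univ (fun x : F => x ^ 2) (fun x => G (x ^ 2))]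
  refine Finset.sum_congr rfl fun u _ => ?_
  rw [Finset.sum_congr rfl (fun x hx => by rw [(Finset.mem_filter.mp hx).2]),
    Finset.sum_const, ← card_sq_eq hF u]
  simp [mul_comm]

lemma sum_char_affine (hF : ringChar F ≠ 2) (e f : F) (hf : f ≠ 0) :
    ∑ u : F, (quadraticChar F (e - f * u) : ℤ) = 0 := by
  have hb : Function.Bijective (fun u : F => e - f * u) := by
    refine Function.bijective_iff_has_inverse.mpr ⟨fun w => f⁻¹ * (e - w), fun u => ?_, fun w => ?_⟩
    · field_simp; ring
    · field_simp; ring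
  rw [Fintype.sum_bijective _ hb _ (fun w => (quadraticChar F w : ℤ)) (fun u => rfl)]
  exact_mod_cast quadraticChar_sum_zero hF

lemma sum_char_mul_ne (hF : ringChar F ≠ 2) (e f : F) (hf : f ≠ 0) (he : e ≠ 0) :
    ∑ u : F, (quadraticChar F u : ℤ) * quadraticChar F (e - f * u)
      = -quadraticChar F (-f) := by
  have h1 : ∀ u : F, u ≠ 0 →
      (quadraticChar F u : ℤ) * quadraticChar F (e - f * u) = quadraticChar F (e * u⁻¹ - f) := by
    intro u hu
    have hrw : e - f * u = u * (e * u⁻¹ - f) := by field_simp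
    rw [hrw, map_mul, ← mul_assoc]
    have : (quadraticChar F u : ℤ) * quadraticChar F u = 1 := by
      have := quadraticChar_sq_one (F := F) hu
      rwa [pow_two] at this
    rw [this, one_mul]
  rw [← Finset.sum_erase_add univ _ (mem_univ (0 : F))]
  simp only [MulChar.map_zero, zero_mul, add_zero]
  rw [Finset.sum_congr rfl (fun u hu => h1 u (Finset.ne_of_mem_erase hu))]
  have hbij : ∑ u ∈ univ.erase (0 : F), (quadraticChar F (e * u⁻¹ - f) : ℤ)
      = ∑ w ∈ univ.erase (-f), (quadraticChar F w : ℤ) := by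
    refine Finset.sum_bij' (fun u _ => e * u⁻¹ - f) (fun w _ => e * (w + f)⁻¹) ?_ ?_ ?_ ?_ ?_
    · intro u hu
      have hu0 : u ≠ 0 := Finset.ne_of_mem_erase hu
      refine Finset.mem_erase.mpr ⟨?_, mem_univ _⟩
      intro h
      have : e * u⁻¹ = 0 := by linear_combination h
      exact he (by simpa [hu0] using this)
    · intro w hw
      have hw0 : w + f ≠ 0 := by
        intro h; exact (Finset.ne_of_mem_erase hw) (by linear_combination h)
      refine Finset.mem_erase.mpr ⟨?_, mem_univ _⟩
      intro h
      exact he (by simpa [hw0] using h)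
    · intro u hu
      have hu0 : u ≠ 0 := Finset.ne_of_mem_erase hu
      show e * (e * u⁻¹ - f + f)⁻¹ = u
      have h2 : e * u⁻¹ - f + f = e * u⁻¹ := by ring
      rw [h2, mul_inv_rev, inv_inv]
      field_simp
    · intro w hw
      have hw0 : w + f ≠ 0 := by
        intro h; exact (Finset.ne_of_mem_erase hw) (by linear_combination h)
      field_simp
      ring
    · intro u hu; rfl
  rw [hbij]
  have := quadraticChar_sum_zero hF
  have h2 : ∑ w ∈ univ.erase (-f), (quadraticChar F w : ℤ) + quadraticChar F (-f) = 0 := by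
    rw [Finset.sum_erase_add univ _ (mem_univ (-f))]; exact_mod_cast this
  linarith

lemma sum_char_mul_zero' (hF : ringChar F ≠ 2) (f : F) (hf : f ≠ 0) :
    ∑ u : F, (quadraticChar F u : ℤ) * quadraticChar F ((0 : F) - f * u)
      = ((Fintype.card F : ℤ) - 1) * quadraticChar F (-f) := by
  have h1 : ∀ u : F, (quadraticChar F u : ℤ) * quadraticChar F ((0:F) - f * u)
      = ((quadraticChar F u : ℤ) * quadraticChar F u) * quadraticChar F (-f) := by
    intro u
    have : (0:F) - f * u = -f * u := by ring
    rw [this, map_mul]; push_cast; ring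
  rw [Finset.sum_congr rfl fun u _ => h1 u, ← Finset.sum_mul]
  congr 1
  rw [← Finset.sum_erase_add univ _ (mem_univ (0 : F))]
  simp only [MulChar.map_zero, zero_mul, add_zero]
  have h2 : ∀ u ∈ univ.erase (0:F), (quadraticChar F u : ℤ) * quadraticChar F u = 1 := by
    intro u hu
    have := quadraticChar_sq_one (F := F) (Finset.ne_of_mem_erase hu)
    rw [pow_two] at this; exact_mod_cast this
  rw [Finset.sum_congr rfl h2]
  rw [Finset.sum_const, Finset.card_erase_of_mem (mem_univ _), Finset.card_univ]
  have h3 : 1 ≤ Fintype.card F := Fintype.card_pos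
  simp [Nat.cast_sub h3]

lemma lemA (hF : ringChar F ≠ 2) (e f : F) (hf : f ≠ 0) :
    ∑ x : F, (quadraticChar F (e - f * x ^ 2) : ℤ)
      = if e = 0 then ((Fintype.card F : ℤ) - 1) * quadraticChar F (-f)
        else -quadraticChar F (-f) := by
  rw [sum_sq_eq hF (fun u => (quadraticChar F (e - f * u) : ℤ))]
  have : ∀ u : F, ((quadraticChar F u : ℤ) + 1) * quadraticChar F (e - f * u)
      = (quadraticChar F u : ℤ) * quadraticChar F (e - f * u) + quadraticChar F (e - f * u) := by
    intro u; ring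
  rw [Finset.sum_congr rfl fun u _ => this u, Finset.sum_add_distrib,
    sum_char_affine hF e f hf, add_zero]
  split_ifs with h
  · subst h; exact sum_char_mul_zero' hF f hf
  · exact sum_char_mul_ne hF e f hf h

end QuadCount
section Count
open Finset
variable {F : Type*} [Field F] [Fintype F] [DecidableEq F]

lemma card_sol_y (hF : ringChar F ≠ 2) (B w : F) (hB : B ≠ 0) :
    ((univ.filter fun y : F => B * y ^ 2 = w).card : ℤ)
      = quadraticChar F (B⁻¹ * w) + 1 := by
  rw [← card_sq_eq hF (B⁻¹ * w)]
  have hset : (univ.filter fun y : F => B * y ^ 2 = w)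
      = univ.filter fun x : F => x ^ 2 = B⁻¹ * w := by
    apply Finset.filter_congr
    intro y _
    constructor
    · intro h; rw [← h]; field_simp
    · intro h; rw [h]; field_simp
  rw [hset]

lemma lemB (hF : ringChar F ≠ 2) (A B C : F) (hA : A ≠ 0) (hB : B ≠ 0) (hC : C ≠ 0) :
    (univ.filter fun t : F × F × F => A * t.1 ^ 2 + B * t.2.1 ^ 2 = C * t.2.2 ^ 2).card
      = Fintype.card F ^ 2 := by
  have key : ((univ.filter fun t : F × F × F =>
      A * t.1 ^ 2 + B * t.2.1 ^ 2 = C * t.2.2 ^ 2).card : ℤ) = (Fintype.card F : ℤ) ^ 2 := by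
    rw [Finset.card_filter]
    push_cast
    rw [Fintype.sum_prod_type]
    have hxy : ∀ x : F, ∑ yz : F × F, (if A * x ^ 2 + B * yz.1 ^ 2 = C * yz.2 ^ 2 then (1:ℤ) else 0)
        = ∑ z : F, ∑ y : F, (if B * y ^ 2 = C * z ^ 2 - A * x ^ 2 then (1:ℤ) else 0) := by
      intro x
      rw [Fintype.sum_prod_type, Finset.sum_comm]
      refine Finset.sum_congr rfl fun z _ => Finset.sum_congr rfl fun y _ => ?_
      congr 1
      simp only [eq_iff_iff]
      constructor <;> intro h <;> linear_combination h
    rw [Finset.sum_congr rfl fun x _ => hxy x]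
    have hy : ∀ x z : F, ∑ y : F, (if B * y ^ 2 = C * z ^ 2 - A * x ^ 2 then (1:ℤ) else 0)
        = quadraticChar F (B⁻¹ * (C * z ^ 2 - A * x ^ 2)) + 1 := by
      intro x z
      rw [← card_sol_y hF B _ hB, Finset.card_filter]
      push_cast
      rfl
    rw [Finset.sum_congr rfl fun x _ => Finset.sum_congr rfl fun z _ => hy x z]
    have hsplit : ∀ x : F, ∑ z : F, ((quadraticChar F (B⁻¹ * (C * z ^ 2 - A * x ^ 2)) : ℤ) + 1)
        = (Fintype.card F : ℤ) + ∑ z : F, (quadraticChar F (B⁻¹ * C * z ^ 2 - B⁻¹ * A * x ^ 2) : ℤ) := by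
      intro x
      rw [Finset.sum_add_distrib, Finset.sum_const, Finset.card_univ]
      have : ∀ z : F, B⁻¹ * (C * z ^ 2 - A * x ^ 2) = B⁻¹ * C * z ^ 2 - B⁻¹ * A * x ^ 2 := by
        intro z; ring
      simp only [this]
      push_cast
      ring
    rw [Finset.sum_congr rfl fun x _ => hsplit x, Finset.sum_add_distrib, Finset.sum_const,
      Finset.card_univ]
    -- now the character double sum; swap order of x and z
    rw [Finset.sum_comm]
    have hinner : ∀ z : F, ∑ x : F, (quadraticChar F (B⁻¹ * C * z ^ 2 - B⁻¹ * A * x ^ 2) : ℤ)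
        = if z = 0 then ((Fintype.card F : ℤ) - 1) * quadraticChar F (-(B⁻¹ * A))
          else -quadraticChar F (-(B⁻¹ * A)) := by
      intro z
      have hf : B⁻¹ * A ≠ 0 := by
        simp [hA, hB]
      rw [lemA hF (B⁻¹ * C * z ^ 2) (B⁻¹ * A) hf]
      have : B⁻¹ * C * z ^ 2 = 0 ↔ z = 0 := by
        constructor
        · intro h
          have := mul_eq_zero.mp h
          rcases this with h' | h'
          · exact absurd h' (by simp [hB, hC])
          · exact pow_eq_zero_iff (n := 2) (by norm_num) |>.mp h'
        · intro h; rw [h]; ring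
      simp only [this]
    rw [Finset.sum_congr rfl fun z _ => hinner z]
    rw [← Finset.sum_erase_add univ _ (mem_univ (0 : F))]
    rw [if_pos rfl, Finset.sum_congr rfl (fun z hz => if_neg (Finset.ne_of_mem_erase hz)),
      Finset.sum_const, Finset.card_erase_of_mem (mem_univ _), Finset.card_univ]
    have h3 : 1 ≤ Fintype.card F := Fintype.card_pos
    rw [nsmul_eq_mul, nsmul_eq_mul, Nat.cast_sub h3]
    push_cast
    ring
  exact_mod_cast key

lemma lemLin1 (α β γ δ : F) (hα : α ≠ 0) :
    (univ.filter fun v : F × F × F => α * v.1 + β * v.2.1 + γ * v.2.2 = δ).card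
      = Fintype.card F ^ 2 := by
  have : Fintype.card F ^ 2 = Fintype.card (F × F) := by
    rw [Fintype.card_prod]; ring
  rw [this, ← Finset.card_univ]
  refine Finset.card_bij' (fun v _ => (v.2.1, v.2.2))
    (fun w _ => (α⁻¹ * (δ - β * w.1 - γ * w.2), w.1, w.2)) (fun v hv => mem_univ _)
    (fun w hw => ?_) ?_ ?_
  · refine Finset.mem_filter.mpr ⟨mem_univ _, ?_⟩
    field_simp
    ring
  · intro v hv
    have h := (Finset.mem_filter.mp hv).2
    have : α⁻¹ * (δ - β * v.2.1 - γ * v.2.2) = v.1 := by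
      field_simp
      linear_combination -h
    ext <;> simp [this]
  · intro w hw; rfl

lemma lemLin (α β γ δ : F) (h : α ≠ 0 ∨ β ≠ 0) :
    (univ.filter fun v : F × F × F => α * v.1 + β * v.2.1 + γ * v.2.2 = δ).card
      = Fintype.card F ^ 2 := by
  rcases h with hα | hβ
  · exact lemLin1 α β γ δ hα
  · have hswap : (univ.filter fun v : F × F × F => α * v.1 + β * v.2.1 + γ * v.2.2 = δ).card
        = (univ.filter fun v : F × F × F => β * v.1 + α * v.2.1 + γ * v.2.2 = δ).card := by
      refine Finset.card_bij' (fun v _ => (v.2.1, v.1, v.2.2)) (fun v _ => (v.2.1, v.1, v.2.2))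
        ?_ ?_ ?_ ?_
      · intro v hv
        refine Finset.mem_filter.mpr ⟨mem_univ _, ?_⟩
        have := (Finset.mem_filter.mp hv).2
        dsimp at this ⊢
        linear_combination this
      · intro v hv
        refine Finset.mem_filter.mpr ⟨mem_univ _, ?_⟩
        have := (Finset.mem_filter.mp hv).2
        dsimp at this ⊢
        linear_combination this
      · intro v _; rfl
      · intro v _; rfl
    rw [hswap]
    exact lemLin1 β α γ δ hβ

end Count
section Base
open Finset

lemma ncard_filter_eq {α : Type*} [Fintype α] (P : α → Prop) [DecidablePred P] :
    {x | P x}.ncard = (univ.filter P).card := by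
  rw [← Set.ncard_coe_finset]
  congr 1
  ext x
  simp

lemma zmod_dvd_val_iff (p : ℕ) [NeZero p] (x : ZMod p) : p ∣ x.val ↔ x = 0 := by
  rw [← ZMod.natCast_eq_zero_iff, ZMod.natCast_val, ZMod.cast_id]

lemma two_ne_zero_zmod (p : ℕ) (hp : p.Prime) (hodd : Odd p) : (2 : ZMod p) ≠ 0 := by
  have hp2 : p ≠ 2 := by rintro rfl; rcases hodd with ⟨k, hk⟩; omega
  intro h
  rw [show (2 : ZMod p) = ((2 : ℕ) : ZMod p) by norm_num] at h
  have := (ZMod.natCast_eq_zero_iff 2 p).mp h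
  exact hp2 ((Nat.prime_dvd_prime_iff_eq hp Nat.prime_two).mp this)

lemma base_count (p : ℕ) (hp : p.Prime) (hodd : Odd p) (c d : ℤ)
    (hc : ¬ (p:ℤ) ∣ c) (hd : ¬ (p:ℤ) ∣ d) :
    {t : ZMod p × ZMod p × ZMod p |
      ¬(p ∣ t.1.val ∧ p ∣ t.2.1.val) ∧
      (c : ZMod p) * t.1 ^ 2 + (d : ZMod p) * t.2.1 ^ 2 = 2 * t.2.2 ^ 2}.ncard
      = p ^ 2 - 1 := by
  classical
  haveI : Fact p.Prime := ⟨hp⟩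
  haveI : NeZero p := ⟨hp.pos.ne'⟩
  have hp2 : p ≠ 2 := by rintro rfl; rcases hodd with ⟨k, hk⟩; omega
  have hchar : ringChar (ZMod p) ≠ 2 := by
    rw [ZMod.ringChar_zmod_n]; exact hp2
  have hc0 : (c : ZMod p) ≠ 0 := fun h => hc ((ZMod.intCast_zmod_eq_zero_iff_dvd c p).mp h)
  have hd0 : (d : ZMod p) ≠ 0 := fun h => hd ((ZMod.intCast_zmod_eq_zero_iff_dvd d p).mp h)
  have h20 : (2 : ZMod p) ≠ 0 := two_ne_zero_zmod p hp hodd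
  have hset : {t : ZMod p × ZMod p × ZMod p |
      ¬(p ∣ t.1.val ∧ p ∣ t.2.1.val) ∧
      (c : ZMod p) * t.1 ^ 2 + (d : ZMod p) * t.2.1 ^ 2 = 2 * t.2.2 ^ 2}
      = {t : ZMod p × ZMod p × ZMod p |
      ((c : ZMod p) * t.1 ^ 2 + (d : ZMod p) * t.2.1 ^ 2 = 2 * t.2.2 ^ 2) ∧
      ¬(t.1 = 0 ∧ t.2.1 = 0)} := by
    ext t
    simp only [Set.mem_setOf_eq, zmod_dvd_val_iff]
    tauto
  rw [hset, ncard_filter_eq]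
  have htot : (univ.filter fun t : ZMod p × ZMod p × ZMod p =>
      (c : ZMod p) * t.1 ^ 2 + (d : ZMod p) * t.2.1 ^ 2 = 2 * t.2.2 ^ 2).card = p ^ 2 := by
    have := lemB hchar (c : ZMod p) (d : ZMod p) 2 hc0 hd0 h20
    rwa [ZMod.card] at this
  have hsplit := Finset.card_filter_add_card_filter_not
    (s := univ.filter fun t : ZMod p × ZMod p × ZMod p =>
      (c : ZMod p) * t.1 ^ 2 + (d : ZMod p) * t.2.1 ^ 2 = 2 * t.2.2 ^ 2)
    (p := fun t : ZMod p × ZMod p × ZMod p => t.1 = 0 ∧ t.2.1 = 0)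
  rw [Finset.filter_filter, Finset.filter_filter, htot] at hsplit
  have hone : (univ.filter fun t : ZMod p × ZMod p × ZMod p =>
      ((c : ZMod p) * t.1 ^ 2 + (d : ZMod p) * t.2.1 ^ 2 = 2 * t.2.2 ^ 2) ∧
      (t.1 = 0 ∧ t.2.1 = 0)).card = 1 := by
    have hsing : (univ.filter fun t : ZMod p × ZMod p × ZMod p =>
        ((c : ZMod p) * t.1 ^ 2 + (d : ZMod p) * t.2.1 ^ 2 = 2 * t.2.2 ^ 2) ∧
        (t.1 = 0 ∧ t.2.1 = 0)) = {((0 : ZMod p), (0 : ZMod p), (0 : ZMod p))} := by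
      ext t
      simp only [Finset.mem_filter, Finset.mem_singleton, Finset.mem_univ, true_and]
      constructor
      · rintro ⟨heq, h1, h2⟩
        have hz : t.2.2 = 0 := by
          rw [h1, h2] at heq
          have heq' : (2 : ZMod p) * t.2.2 ^ 2 = 0 := by
            rw [← heq]; ring
          rcases mul_eq_zero.mp heq' with h | h
          · exact absurd h h20
          · exact pow_eq_zero_iff (n := 2) (by norm_num) |>.mp h
        have h1' : t.1 = 0 := h1
        have h2' : t.2.1 = 0 := h2
        ext
        · exact h1'
        · exact h2'
        · exact hz
      · rintro rfl
        refine ⟨by norm_num, rfl, rfl⟩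
    rw [hsing, Finset.card_singleton]
  have hcongr : (univ.filter fun t : ZMod p × ZMod p × ZMod p =>
      ((c : ZMod p) * t.1 ^ 2 + (d : ZMod p) * t.2.1 ^ 2 = 2 * t.2.2 ^ 2) ∧
      ¬(t.1 = 0 ∧ t.2.1 = 0)).card
      = (univ.filter fun t : ZMod p × ZMod p × ZMod p =>
      ((c : ZMod p) * t.1 ^ 2 + (d : ZMod p) * t.2.1 ^ 2 = 2 * t.2.2 ^ 2) ∧
      ¬(t.1 = 0 ∧ t.2.1 = 0)).card := rfl
  omega

end Base
section Lift
open Finset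

variable {p : ℕ}

/-- the lift of `x : ZMod (p^n)` by `a : ZMod p` to `ZMod (p^(n+1))`. -/
def lift1 (p n : ℕ) (x : ZMod (p ^ n)) (a : ZMod p) : ZMod (p ^ (n + 1)) :=
  ((x.val + p ^ n * a.val : ℕ) : ZMod (p ^ (n + 1)))

/-- the descent of `X : ZMod (p^(n+1))` to `ZMod p` (top digit). -/
def down1 (p n : ℕ) (X : ZMod (p ^ (n + 1))) : ZMod p :=
  ((X.val / p ^ n : ℕ) : ZMod p)

lemma lift1_lt (hp : p.Prime) (n : ℕ) (x : ZMod (p ^ n)) (a : ZMod p) :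
    x.val + p ^ n * a.val < p ^ (n + 1) := by
  haveI : NeZero p := ⟨hp.pos.ne'⟩
  haveI : NeZero (p ^ n) := ⟨pow_ne_zero n hp.pos.ne'⟩
  have h1 := ZMod.val_lt x
  have h2 := ZMod.val_lt a
  have h3 : p ^ n * a.val ≤ p ^ n * (p - 1) := Nat.mul_le_mul_left _ (by omega)
  have h4 : p ^ n + p ^ n * (p - 1) = p ^ n * p := by
    have h5 : p - 1 + 1 = p := Nat.succ_pred_eq_of_pos hp.pos
    calc p ^ n + p ^ n * (p - 1) = p ^ n * (p - 1 + 1) := by ring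
    _ = p ^ n * p := by rw [h5]
  rw [pow_succ]
  omega

lemma lift1_val (hp : p.Prime) (n : ℕ) (x : ZMod (p ^ n)) (a : ZMod p) :
    (lift1 p n x a).val = x.val + p ^ n * a.val :=
  ZMod.val_cast_of_lt (lift1_lt hp n x a)

lemma cast_lift1 (hp : p.Prime) (n : ℕ) (x : ZMod (p ^ n)) (a : ZMod p) :
    ZMod.castHom (pow_dvd_pow p (Nat.le_succ n)) (ZMod (p ^ n)) (lift1 p n x a) = x := by
  haveI : NeZero (p ^ n) := ⟨pow_ne_zero n hp.pos.ne'⟩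
  unfold lift1
  rw [map_natCast, Nat.cast_add, Nat.cast_mul, ZMod.natCast_self, zero_mul, add_zero,
    ZMod.natCast_val, ZMod.cast_id]

lemma down1_lift1 (hp : p.Prime) (n : ℕ) (x : ZMod (p ^ n)) (a : ZMod p) :
    down1 p n (lift1 p n x a) = a := by
  haveI : NeZero p := ⟨hp.pos.ne'⟩
  haveI : NeZero (p ^ n) := ⟨pow_ne_zero n hp.pos.ne'⟩
  unfold down1
  rw [lift1_val hp n x a]
  have h1 : (x.val + p ^ n * a.val) / p ^ n = a.val := by
    rw [Nat.add_mul_div_left _ _ (pow_pos hp.pos n), Nat.div_eq_of_lt (ZMod.val_lt x), zero_add]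
  rw [h1, ZMod.natCast_val, ZMod.cast_id]

lemma lift1_down1 (hp : p.Prime) (n : ℕ) (X : ZMod (p ^ (n + 1))) (x : ZMod (p ^ n))
    (hX : ZMod.castHom (pow_dvd_pow p (Nat.le_succ n)) (ZMod (p ^ n)) X = x) :
    lift1 p n x (down1 p n X) = X := by
  haveI : NeZero p := ⟨hp.pos.ne'⟩
  haveI : NeZero (p ^ n) := ⟨pow_ne_zero n hp.pos.ne'⟩
  haveI : NeZero (p ^ (n + 1)) := ⟨pow_ne_zero _ hp.pos.ne'⟩
  have hxval : x.val = X.val % p ^ n := by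
    rw [← hX, ZMod.castHom_apply, ← ZMod.natCast_val, ZMod.val_natCast]
  have hdlt : X.val / p ^ n < p := by
    rw [Nat.div_lt_iff_lt_mul (pow_pos hp.pos n)]
    have h6 := ZMod.val_lt X
    have h7 : p ^ (n + 1) = p ^ n * p := pow_succ p n
    have h8 : p * p ^ n = p ^ n * p := mul_comm _ _
    omega
  have hdval : (down1 p n X).val = X.val / p ^ n := by
    unfold down1
    rw [ZMod.val_natCast, Nat.mod_eq_of_lt hdlt]
  unfold lift1
  rw [hdval, hxval, Nat.mod_add_div, ZMod.natCast_val, ZMod.cast_id]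

lemma dvd_lift1_val (hp : p.Prime) (n : ℕ) (hn : 1 ≤ n) (x : ZMod (p ^ n)) (a : ZMod p) :
    p ∣ (lift1 p n x a).val ↔ p ∣ x.val := by
  rw [lift1_val hp n x a]
  have hdv : p ∣ p ^ n * a.val := Dvd.dvd.mul_right (dvd_pow_self p (by omega)) _
  exact ⟨fun h => (Nat.dvd_add_right hdv).mp (by rwa [add_comm] at h),
    fun h => dvd_add h hdv⟩

end Lift
section EqIff
open Finset

lemma lift_eq_iff (p : ℕ) (hp : p.Prime) (c d : ℤ) (n : ℕ) (hn : 1 ≤ n)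
    (x y z : ZMod (p ^ n)) (k : ℤ)
    (hk : (c * (x.val : ℤ) ^ 2 + d * (y.val : ℤ) ^ 2 - 2 * (z.val : ℤ) ^ 2 : ℤ) = (p : ℤ) ^ n * k)
    (a b e : ZMod p) :
    ((c : ZMod (p ^ (n + 1))) * (lift1 p n x a) ^ 2 + (d : ZMod (p ^ (n + 1))) * (lift1 p n y b) ^ 2
        = 2 * (lift1 p n z e) ^ 2)
      ↔ (2 * (c : ZMod p) * (x.val : ZMod p)) * a + (2 * (d : ZMod p) * (y.val : ZMod p)) * b
          + (-(4 * (z.val : ZMod p))) * e = -(k : ZMod p) := by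
  haveI : NeZero p := ⟨hp.pos.ne'⟩
  haveI : NeZero (p ^ n) := ⟨pow_ne_zero n hp.pos.ne'⟩
  haveI : NeZero (p ^ (n + 1)) := ⟨pow_ne_zero _ hp.pos.ne'⟩
  have hcast : ∀ (m : ZMod (p ^ n)) (a : ZMod p),
      (lift1 p n m a) = ((((m.val : ℤ) + (p : ℤ) ^ n * (a.val : ℤ)) : ℤ) : ZMod (p ^ (n + 1))) := by
    intro m a
    unfold lift1
    push_cast
    ring
  rw [hcast x a, hcast y b, hcast z e]
  set X₀ : ℤ := (x.val : ℤ) + (p : ℤ) ^ n * (a.val : ℤ) with hX₀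
  set Y₀ : ℤ := (y.val : ℤ) + (p : ℤ) ^ n * (b.val : ℤ) with hY₀
  set Z₀ : ℤ := (z.val : ℤ) + (p : ℤ) ^ n * (e.val : ℤ) with hZ₀
  have h1 : ((c : ZMod (p ^ (n + 1))) * ((X₀ : ℤ) : ZMod (p ^ (n + 1))) ^ 2
      + (d : ZMod (p ^ (n + 1))) * ((Y₀ : ℤ) : ZMod (p ^ (n + 1))) ^ 2
      = 2 * ((Z₀ : ℤ) : ZMod (p ^ (n + 1))) ^ 2)
      ↔ (((c * X₀ ^ 2 + d * Y₀ ^ 2 - 2 * Z₀ ^ 2 : ℤ)) : ZMod (p ^ (n + 1))) = 0 := by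
    constructor
    · intro h
      push_cast
      linear_combination h
    · intro h
      push_cast at h
      linear_combination h
  rw [h1, ZMod.intCast_zmod_eq_zero_iff_dvd]
  set L : ℤ := 2 * c * (x.val : ℤ) * (a.val : ℤ) + 2 * d * (y.val : ℤ) * (b.val : ℤ)
      - 4 * (z.val : ℤ) * (e.val : ℤ) with hL
  set Q : ℤ := c * (a.val : ℤ) ^ 2 + d * (b.val : ℤ) ^ 2 - 2 * (e.val : ℤ) ^ 2 with hQ
  have hE : (c * X₀ ^ 2 + d * Y₀ ^ 2 - 2 * Z₀ ^ 2 : ℤ)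
      = (p : ℤ) ^ n * ((p : ℤ) ^ n * Q + (k + L)) := by
    rw [hX₀, hY₀, hZ₀, hL, hQ]
    linear_combination hk
  rw [hE]
  have h2 : ((p ^ (n + 1) : ℕ) : ℤ) = (p : ℤ) ^ n * (p : ℤ) := by
    push_cast [pow_succ]
    ring
  rw [h2, mul_dvd_mul_iff_left (pow_ne_zero n (by exact_mod_cast hp.pos.ne' : (p : ℤ) ≠ 0))]
  have h3 : (p : ℤ) ∣ (p : ℤ) ^ n * Q := Dvd.dvd.mul_right (dvd_pow_self _ (by omega)) _
  rw [dvd_add_right h3, ← ZMod.intCast_zmod_eq_zero_iff_dvd]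
  have h4 : ((k + L : ℤ) : ZMod p) = (k : ZMod p) + (2 * (c : ZMod p) * (x.val : ZMod p)) * a
      + (2 * (d : ZMod p) * (y.val : ZMod p)) * b - (4 * (z.val : ZMod p)) * e := by
    rw [hL]
    push_cast
    rw [ZMod.natCast_val a, ZMod.cast_id, ZMod.natCast_val b, ZMod.cast_id,
      ZMod.natCast_val e, ZMod.cast_id]
    ring
  rw [h4]
  constructor
  · intro h
    linear_combination h
  · intro h
    linear_combination h

end EqIff
section Step
open Finset

lemma dvd_val_cast (p : ℕ) (hp : p.Prime) (n : ℕ) (hn : 1 ≤ n) (X : ZMod (p ^ (n + 1))) :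
    p ∣ (ZMod.castHom (pow_dvd_pow p (Nat.le_succ n)) (ZMod (p ^ n)) X).val ↔ p ∣ X.val := by
  haveI : NeZero p := ⟨hp.pos.ne'⟩
  haveI : NeZero (p ^ n) := ⟨pow_ne_zero n hp.pos.ne'⟩
  haveI : NeZero (p ^ (n + 1)) := ⟨pow_ne_zero _ hp.pos.ne'⟩
  have h1 : (ZMod.castHom (pow_dvd_pow p (Nat.le_succ n)) (ZMod (p ^ n)) X).val
      = X.val % p ^ n := by
    rw [ZMod.castHom_apply, ← ZMod.natCast_val, ZMod.val_natCast]
  rw [h1, Nat.dvd_mod_iff (dvd_pow_self p (by omega))]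

lemma step_count (p : ℕ) (hp : p.Prime) (hodd : Odd p) (c d : ℤ)
    (hc : ¬ (p:ℤ) ∣ c) (hd : ¬ (p:ℤ) ∣ d) (n : ℕ) (hn : 1 ≤ n) :
    {t : ZMod (p ^ (n + 1)) × ZMod (p ^ (n + 1)) × ZMod (p ^ (n + 1)) |
      ¬(p ∣ t.1.val ∧ p ∣ t.2.1.val) ∧
      (c : ZMod (p ^ (n + 1))) * t.1 ^ 2 + (d : ZMod (p ^ (n + 1))) * t.2.1 ^ 2
        = 2 * t.2.2 ^ 2}.ncard
    = p ^ 2 * {t : ZMod (p ^ n) × ZMod (p ^ n) × ZMod (p ^ n) |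
      ¬(p ∣ t.1.val ∧ p ∣ t.2.1.val) ∧
      (c : ZMod (p ^ n)) * t.1 ^ 2 + (d : ZMod (p ^ n)) * t.2.1 ^ 2 = 2 * t.2.2 ^ 2}.ncard := by
  classical
  haveI : Fact p.Prime := ⟨hp⟩
  haveI : NeZero p := ⟨hp.pos.ne'⟩
  haveI : NeZero (p ^ n) := ⟨pow_ne_zero n hp.pos.ne'⟩
  haveI : NeZero (p ^ (n + 1)) := ⟨pow_ne_zero _ hp.pos.ne'⟩
  have hp2 : p ≠ 2 := by rintro rfl; rcases hodd with ⟨k, hk⟩; omega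
  have hc0 : (c : ZMod p) ≠ 0 := fun h => hc ((ZMod.intCast_zmod_eq_zero_iff_dvd c p).mp h)
  have hd0 : (d : ZMod p) ≠ 0 := fun h => hd ((ZMod.intCast_zmod_eq_zero_iff_dvd d p).mp h)
  have h20 : (2 : ZMod p) ≠ 0 := two_ne_zero_zmod p hp hodd
  rw [ncard_filter_eq, ncard_filter_eq]
  set π : (ZMod (p ^ (n + 1)) × ZMod (p ^ (n + 1)) × ZMod (p ^ (n + 1)))
      → (ZMod (p ^ n) × ZMod (p ^ n) × ZMod (p ^ n)) :=
    fun t => (ZMod.castHom (pow_dvd_pow p (Nat.le_succ n)) (ZMod (p ^ n)) t.1,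
              ZMod.castHom (pow_dvd_pow p (Nat.le_succ n)) (ZMod (p ^ n)) t.2.1,
              ZMod.castHom (pow_dvd_pow p (Nat.le_succ n)) (ZMod (p ^ n)) t.2.2) with hπdef
  have hmaps : ∀ t ∈ (univ.filter fun t : ZMod (p ^ (n + 1)) × ZMod (p ^ (n + 1)) × ZMod (p ^ (n + 1)) =>
      ¬(p ∣ t.1.val ∧ p ∣ t.2.1.val) ∧
      (c : ZMod (p ^ (n + 1))) * t.1 ^ 2 + (d : ZMod (p ^ (n + 1))) * t.2.1 ^ 2 = 2 * t.2.2 ^ 2),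
      π t ∈ (univ.filter fun t : ZMod (p ^ n) × ZMod (p ^ n) × ZMod (p ^ n) =>
      ¬(p ∣ t.1.val ∧ p ∣ t.2.1.val) ∧
      (c : ZMod (p ^ n)) * t.1 ^ 2 + (d : ZMod (p ^ n)) * t.2.1 ^ 2 = 2 * t.2.2 ^ 2) := by
    intro t ht
    obtain ⟨-, hprim, heq⟩ := Finset.mem_filter.mp ht
    refine Finset.mem_filter.mpr ⟨mem_univ _, ?_, ?_⟩
    · rw [hπdef]
      dsimp only
      rw [dvd_val_cast p hp n hn, dvd_val_cast p hp n hn]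
      exact hprim
    · rw [hπdef]
      dsimp only
      have := congrArg (ZMod.castHom (pow_dvd_pow p (Nat.le_succ n)) (ZMod (p ^ n))) heq
      simpa only [map_add, map_mul, map_pow, map_intCast, map_ofNat] using this
  rw [Finset.card_eq_sum_card_fiberwise hmaps]
  have key : ∀ s ∈ (univ.filter fun t : ZMod (p ^ n) × ZMod (p ^ n) × ZMod (p ^ n) =>
      ¬(p ∣ t.1.val ∧ p ∣ t.2.1.val) ∧
      (c : ZMod (p ^ n)) * t.1 ^ 2 + (d : ZMod (p ^ n)) * t.2.1 ^ 2 = 2 * t.2.2 ^ 2),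
      ((univ.filter fun t : ZMod (p ^ (n + 1)) × ZMod (p ^ (n + 1)) × ZMod (p ^ (n + 1)) =>
      ¬(p ∣ t.1.val ∧ p ∣ t.2.1.val) ∧
      (c : ZMod (p ^ (n + 1))) * t.1 ^ 2 + (d : ZMod (p ^ (n + 1))) * t.2.1 ^ 2
        = 2 * t.2.2 ^ 2).filter fun t => π t = s).card = p ^ 2 := by
    rintro ⟨x, y, z⟩ hs
    obtain ⟨-, hprim, heq⟩ := Finset.mem_filter.mp hs
    -- the integer divisibility
    have hK : ((p : ℤ)) ^ n ∣ (c * (x.val : ℤ) ^ 2 + d * (y.val : ℤ) ^ 2 - 2 * (z.val : ℤ) ^ 2) := by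
      have h0 : ((c * (x.val : ℤ) ^ 2 + d * (y.val : ℤ) ^ 2 - 2 * (z.val : ℤ) ^ 2 : ℤ)
          : ZMod (p ^ n)) = 0 := by
        push_cast [ZMod.natCast_val, ZMod.cast_id]
        linear_combination heq
      have := (ZMod.intCast_zmod_eq_zero_iff_dvd _ (p ^ n)).mp h0
      exact_mod_cast this
    obtain ⟨k, hk⟩ := hK
    -- coefficients of the linear form
    set α : ZMod p := 2 * (c : ZMod p) * (x.val : ZMod p) with hα
    set β : ZMod p := 2 * (d : ZMod p) * (y.val : ZMod p) with hβ
    set γ : ZMod p := -(4 * (z.val : ZMod p)) with hγ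
    set δ : ZMod p := -(k : ZMod p) with hδ
    have hαβ : α ≠ 0 ∨ β ≠ 0 := by
      rcases not_and_or.mp hprim with h | h
      · left
        intro h0
        apply h
        rw [← ZMod.natCast_eq_zero_iff]
        rcases mul_eq_zero.mp h0 with h1 | h1
        · rcases mul_eq_zero.mp h1 with h2 | h2
          · exact absurd h2 h20
          · exact absurd h2 hc0
        · exact h1
      · right
        intro h0
        apply h
        rw [← ZMod.natCast_eq_zero_iff]
        rcases mul_eq_zero.mp h0 with h1 | h1
        · rcases mul_eq_zero.mp h1 with h2 | h2
          · exact absurd h2 h20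
          · exact absurd h2 hd0
        · exact h1
    have hL : (univ.filter fun v : ZMod p × ZMod p × ZMod p =>
        α * v.1 + β * v.2.1 + γ * v.2.2 = δ).card = p ^ 2 := by
      rw [lemLin α β γ δ hαβ, ZMod.card]
    rw [← hL]
    refine Finset.card_bij' (fun t _ => (down1 p n t.1, down1 p n t.2.1, down1 p n t.2.2))
      (fun v _ => (lift1 p n x v.1, lift1 p n y v.2.1, lift1 p n z v.2.2)) ?_ ?_ ?_ ?_
    · -- down maps fiber into linear solutions
      intro t ht
      obtain ⟨ht1, hπt⟩ := Finset.mem_filter.mp ht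
      obtain ⟨-, -, heqt⟩ := Finset.mem_filter.mp ht1
      have hπ1 : ZMod.castHom (pow_dvd_pow p (Nat.le_succ n)) (ZMod (p ^ n)) t.1 = x :=
        congrArg Prod.fst hπt
      have hπ2 : ZMod.castHom (pow_dvd_pow p (Nat.le_succ n)) (ZMod (p ^ n)) t.2.1 = y :=
        congrArg (fun s => s.2.1) hπt
      have hπ3 : ZMod.castHom (pow_dvd_pow p (Nat.le_succ n)) (ZMod (p ^ n)) t.2.2 = z :=
        congrArg (fun s => s.2.2) hπt
      have hre1 : lift1 p n x (down1 p n t.1) = t.1 := lift1_down1 hp n t.1 x hπ1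
      have hre2 : lift1 p n y (down1 p n t.2.1) = t.2.1 := lift1_down1 hp n t.2.1 y hπ2
      have hre3 : lift1 p n z (down1 p n t.2.2) = t.2.2 := lift1_down1 hp n t.2.2 z hπ3
      refine Finset.mem_filter.mpr ⟨mem_univ _, ?_⟩
      have heqt' : (c : ZMod (p ^ (n + 1))) * (lift1 p n x (down1 p n t.1)) ^ 2
          + (d : ZMod (p ^ (n + 1))) * (lift1 p n y (down1 p n t.2.1)) ^ 2
          = 2 * (lift1 p n z (down1 p n t.2.2)) ^ 2 := by
        rw [hre1, hre2, hre3]; exact heqt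
      exact (lift_eq_iff p hp c d n hn x y z k hk _ _ _).mp heqt'
    · -- lift maps linear solutions into fiber
      intro v hv
      have hlin := (Finset.mem_filter.mp hv).2
      refine Finset.mem_filter.mpr ⟨Finset.mem_filter.mpr ⟨mem_univ _, ?_, ?_⟩, ?_⟩
      · -- primitivity
        dsimp only
        rw [dvd_lift1_val hp n hn, dvd_lift1_val hp n hn]
        exact hprim
      · -- equation
        exact (lift_eq_iff p hp c d n hn x y z k hk _ _ _).mpr hlin
      · -- projects to s
        rw [hπdef]
        dsimp only
        rw [cast_lift1 hp n, cast_lift1 hp n, cast_lift1 hp n]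
    · -- right inverse on fiber
      intro t ht
      obtain ⟨-, hπt⟩ := Finset.mem_filter.mp ht
      have hπ1 : ZMod.castHom (pow_dvd_pow p (Nat.le_succ n)) (ZMod (p ^ n)) t.1 = x :=
        congrArg Prod.fst hπt
      have hπ2 : ZMod.castHom (pow_dvd_pow p (Nat.le_succ n)) (ZMod (p ^ n)) t.2.1 = y :=
        congrArg (fun s => s.2.1) hπt
      have hπ3 : ZMod.castHom (pow_dvd_pow p (Nat.le_succ n)) (ZMod (p ^ n)) t.2.2 = z :=
        congrArg (fun s => s.2.2) hπt
      ext
      · exact lift1_down1 hp n t.1 x hπ1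
      · exact lift1_down1 hp n t.2.1 y hπ2
      · exact lift1_down1 hp n t.2.2 z hπ3
    · -- left inverse on linear solutions
      intro v hv
      ext
      · exact down1_lift1 hp n x v.1
      · exact down1_lift1 hp n y v.2.1
      · exact down1_lift1 hp n z v.2.2
  rw [Finset.sum_congr rfl key, Finset.sum_const, smul_eq_mul, mul_comm]

end Step
theorem padic_density_nu_zero (p : ℕ) (hp : p.Prime) (hodd : Odd p)
    (c d : ℤ) (hcd : ¬ (p : ℤ) ∣ c * d) (n : ℕ) (hn : 1 ≤ n) :
    Set.ncard {t : ZMod (p ^ n) × ZMod (p ^ n) × ZMod (p ^ n) |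
      ¬(p ∣ t.1.val ∧ p ∣ t.2.1.val) ∧
      (c : ZMod (p ^ n)) * t.1 ^ 2 + (d : ZMod (p ^ n)) * t.2.1 ^ 2 =
        2 * t.2.2 ^ 2} = p ^ (2 * n) - p ^ (2 * n - 2) := by
  have hc : ¬ (p:ℤ) ∣ c := fun h => hcd (h.mul_right d)
  have hd : ¬ (p:ℤ) ∣ d := fun h => hcd (h.mul_left c)
  induction n, hn using Nat.le_induction with
  | base =>
    have hbase : ∀ (m : ℕ), m = p →
        {t : ZMod m × ZMod m × ZMod m |
          ¬(p ∣ t.1.val ∧ p ∣ t.2.1.val) ∧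
          (c : ZMod m) * t.1 ^ 2 + (d : ZMod m) * t.2.1 ^ 2 = 2 * t.2.2 ^ 2}.ncard
          = p ^ 2 - 1 := by
      rintro m rfl
      exact base_count _ hp hodd c d hc hd
    rw [hbase (p ^ 1) (pow_one p)]
    norm_num
  | succ n hn ih =>
    rw [step_count p hp hodd c d hc hd n hn, ih]
    have e1 : p ^ 2 * p ^ (2 * n) = p ^ (2 * (n + 1)) := by
      rw [← pow_add]; congr 1; ring
    have e2 : p ^ 2 * p ^ (2 * n - 2) = p ^ (2 * (n + 1) - 2) := by
      rw [← pow_add]; congr 1; omega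
    rw [Nat.mul_sub, e1, e2]
end

section
/- There exists an absolute constant C > 0 with the following property. Let p be an odd prime, let c, d be integers with p ∤ c·d such that 2d is a quadratic residue modulo p, and let μ ≥ 1 and n ≥ μ + 3 be integers. Then |p^{−2n}·M − (1 − 1/p)·(μ·(1 − 1/p) + 1 + 1/p)| ≤ C·p^{−(n−μ−2)}, where M is the number of triples (x, y, z) ∈ (ℤ/p^nℤ)³ such that x and y are not both divisible by p and c·p^μ·x² + d·y² ≡ 2z² (mod p^n). -/
open Finset

section aux
variable {p n : ℕ}

lemma my_cast_val [NeZero (p^n)] (w : ZMod (p^n)) : ((w.val : ℕ) : ZMod (p^n)) = w := by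
  rw [ZMod.natCast_val, ZMod.cast_id]

lemma countA [NeZero (p^n)] (hp : p.Prime) {i : ℕ} (hin : i ≤ n) :
    ((Finset.univ : Finset (ZMod (p^n))).filter (fun w => p^i ∣ w.val)).card = p^(n-i) := by
  have hp0 : 0 < p := hp.pos
  have hpi : 0 < p ^ i := pow_pos hp0 i
  have hpow : p^(n-i) * p^i = p^n := by rw [← pow_add]; congr 1; omega
  have h1 : ((Finset.univ : Finset (ZMod (p^n))).filter (fun w => p^i ∣ w.val)).card
      = ((Finset.range (p^n)).filter (fun m => p^i ∣ m)).card := by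
    apply Finset.card_bij (fun w _ => w.val)
    · intro a ha
      simp only [mem_filter, mem_range, mem_univ, true_and] at ha ⊢
      exact ⟨ZMod.val_lt a, ha⟩
    · intro a _ b _ h
      exact ZMod.val_injective _ h
    · intro m hm
      simp only [mem_filter, mem_range, mem_univ, true_and] at hm
      exact ⟨(m : ZMod (p^n)), by simp only [mem_filter, mem_univ, true_and,
        ZMod.val_cast_of_lt hm.1]; exact hm.2, ZMod.val_cast_of_lt hm.1⟩
  have h2 : ((Finset.range (p^n)).filter (fun m => p^i ∣ m)).card
      = (Finset.range (p^(n-i))).card := by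
    apply (Finset.card_bij (fun m _ => m * p^i) ?_ ?_ ?_).symm
    · intro a ha
      simp only [mem_range, mem_filter] at ha ⊢
      refine ⟨?_, Dvd.intro_left a rfl⟩
      calc a * p^i < p^(n-i) * p^i := by exact Nat.mul_lt_mul_of_lt_of_le ha (le_refl _) hpi
        _ = p^n := hpow
    · intro a _ b _ h
      exact Nat.eq_of_mul_eq_mul_right hpi h
    · intro m hm
      simp only [mem_filter, mem_range] at hm
      obtain ⟨hlt, k, hk⟩ := hm
      rw [Nat.mul_comm] at hk
      refine ⟨k, ?_, by show k * p^i = m; omega⟩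
      simp only [mem_range]
      by_contra hc
      push_neg at hc
      have h3 : p^(n-i) * p^i ≤ k * p^i := Nat.mul_le_mul_right _ hc
      rw [hpow] at h3
      omega
  rw [h1, h2, Finset.card_range]
end aux

section aux2
variable {p n : ℕ}

lemma dvdB [NeZero (p^n)] (hp : p.Prime) {i : ℕ} (hin : i ≤ n) (w : ZMod (p^n)) :
    (p : ZMod (p^n))^i ∣ w ↔ p^i ∣ w.val := by
  constructor
  · rintro ⟨z, rfl⟩
    have h1 : ((p : ZMod (p^n))^i * z).val = (((p^i : ℕ) : ZMod (p^n)) * z).val := by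
      push_cast; ring_nf
    rw [h1, ZMod.val_mul, ZMod.val_natCast]
    refine (Nat.dvd_mod_iff (pow_dvd_pow p hin)).mpr ?_
    exact Dvd.dvd.mul_right ((Nat.dvd_mod_iff (pow_dvd_pow p hin)).mpr dvd_rfl) _
  · rintro ⟨t, ht⟩
    refine ⟨(t : ZMod (p^n)), ?_⟩
    have : w = ((w.val : ℕ) : ZMod (p^n)) := (my_cast_val w).symm
    rw [this, ht]
    push_cast; ring

lemma annC [NeZero (p^n)] (hp : p.Prime) {i : ℕ} (hin : i ≤ n) (w : ZMod (p^n)) :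
    (p : ZMod (p^n))^i * w = 0 ↔ (p : ZMod (p^n))^(n-i) ∣ w := by
  have hpn : ((p:ZMod (p^n)))^n = 0 := by
    have : ((p^n : ℕ) : ZMod (p^n)) = 0 := ZMod.natCast_self _
    push_cast at this; exact this
  constructor
  · intro h
    have h2 : (((p^i * w.val : ℕ)) : ZMod (p^n)) = 0 := by
      push_cast
      rw [my_cast_val]
      exact h
    rw [ZMod.natCast_eq_zero_iff] at h2
    have h3 : p^i * p^(n-i) ∣ p^i * w.val := by
      rw [← pow_add]
      have : i + (n - i) = n := by omega
      rw [this]; exact h2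
    have h4 : p^(n-i) ∣ w.val :=
      (Nat.mul_dvd_mul_iff_left (pow_pos hp.pos i)).mp h3
    exact (dvdB hp (Nat.sub_le n i) w).mpr h4
  · rintro ⟨z, rfl⟩
    rw [← mul_assoc, ← pow_add]
    have : i + (n - i) = n := by omega
    rw [this, hpn, zero_mul]

lemma unitU [NeZero (p^n)] (hp : p.Prime) (hn : n ≠ 0) (w : ZMod (p^n)) :
    IsUnit w ↔ ¬ p ∣ w.val := by
  have h1 : IsUnit w ↔ IsUnit ((w.val : ℕ) : ZMod (p^n)) := by rw [my_cast_val]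
  rw [h1, ZMod.isUnit_iff_coprime, Nat.coprime_pow_right_iff (by omega),
    Nat.coprime_comm, Nat.Prime.coprime_iff_not_dvd hp]
end aux2

section aux3
variable {p n : ℕ}

lemma countU [NeZero (p^n)] (hp : p.Prime) (hn : n ≠ 0) :
    ((Finset.univ : Finset (ZMod (p^n))).filter (fun w => IsUnit w)).card
      = p^n - p^(n-1) := by
  have h1 : ((Finset.univ : Finset (ZMod (p^n))).filter (fun w => IsUnit w))
      = ((Finset.univ : Finset (ZMod (p^n))).filter (fun w => ¬ p ∣ w.val)) := by
    apply Finset.filter_congr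
    intro w _
    simp [unitU hp hn w]
  rw [h1]
  have h2 := Finset.card_filter_add_card_filter_not
    (s := (Finset.univ : Finset (ZMod (p^n)))) (p := fun w : ZMod (p^n) => p ∣ w.val)
  have h3 : ((Finset.univ : Finset (ZMod (p^n))).filter (fun w => p ∣ w.val)).card
      = p^(n-1) := by
    have := countA (p := p) (n := n) hp (i := 1) (by omega)
    simpa using this
  have h4 : (Finset.univ : Finset (ZMod (p^n))).card = p^n := by
    rw [Finset.card_univ, ZMod.card]
  omega

lemma countFirstUnit [NeZero (p^n)] (hp : p.Prime) (hn : n ≠ 0) (s : ZMod (p^n)) :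
    ((Finset.univ : Finset (ZMod (p^n) × ZMod (p^n))).filter
      (fun w => w.1 * w.2 = s ∧ IsUnit w.1)).card = p^n - p^(n-1) := by
  rw [← countU hp hn]
  apply Finset.card_bij (fun w _ => w.1)
  · intro w hw
    simp only [Finset.mem_filter, Finset.mem_univ, true_and] at hw ⊢
    exact hw.2
  · intro w1 h1 w2 h2 heq
    simp only [Finset.mem_filter, Finset.mem_univ, true_and] at h1 h2
    have h3 : w1.1 * w1.2 = w1.1 * w2.2 := by
      rw [h1.1, heq, h2.1]
    have := h1.2.mul_left_cancel h3
    exact Prod.ext heq this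
  · intro u hu
    simp only [Finset.mem_filter, Finset.mem_univ, true_and] at hu
    refine ⟨(u, (hu.unit⁻¹ : (ZMod (p^n))ˣ) * s), ?_, rfl⟩
    simp only [Finset.mem_filter, Finset.mem_univ, true_and]
    refine ⟨?_, hu⟩
    rw [← mul_assoc, IsUnit.mul_val_inv hu, one_mul]

lemma countSecondUnit [NeZero (p^n)] (hp : p.Prime) (hn : n ≠ 0) (s : ZMod (p^n)) :
    ((Finset.univ : Finset (ZMod (p^n) × ZMod (p^n))).filter
      (fun w => w.1 * w.2 = s ∧ IsUnit w.2)).card = p^n - p^(n-1) := by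
  rw [← countFirstUnit hp hn s]
  apply Finset.card_bij (fun w _ => (w.2, w.1))
  · intro w hw
    simp only [Finset.mem_filter, Finset.mem_univ, true_and] at hw ⊢
    exact ⟨by rw [mul_comm]; exact hw.1, hw.2⟩
  · intro w1 _ w2 _ heq
    have h1 := congrArg Prod.fst heq
    have h2 := congrArg Prod.snd heq
    simp only at h1 h2
    exact Prod.ext h2 h1
  · intro w hw
    simp only [Finset.mem_filter, Finset.mem_univ, true_and] at hw
    refine ⟨(w.2, w.1), ?_, rfl⟩
    simp only [Finset.mem_filter, Finset.mem_univ, true_and]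
    exact ⟨by rw [mul_comm]; exact hw.1, hw.2⟩

-- the 2φ count
lemma countCU [NeZero (p^n)] (hp : p.Prime) (hn : n ≠ 0) (s : ZMod (p^n)) (hs : ¬ IsUnit s) :
    ((Finset.univ : Finset (ZMod (p^n) × ZMod (p^n))).filter
      (fun w => w.1 * w.2 = s ∧ (IsUnit w.1 ∨ IsUnit w.2))).card
      = 2 * (p^n - p^(n-1)) := by
  classical
  have hsplit : ((Finset.univ : Finset (ZMod (p^n) × ZMod (p^n))).filter
      (fun w => w.1 * w.2 = s ∧ (IsUnit w.1 ∨ IsUnit w.2)))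
      = ((Finset.univ).filter (fun w : ZMod (p^n) × ZMod (p^n) => w.1 * w.2 = s ∧ IsUnit w.1))
        ∪ ((Finset.univ).filter (fun w : ZMod (p^n) × ZMod (p^n) => w.1 * w.2 = s ∧ IsUnit w.2)) := by
    ext w
    simp only [Finset.mem_filter, Finset.mem_union, Finset.mem_univ, true_and]
    tauto
  have hdisj : Disjoint
      ((Finset.univ).filter (fun w : ZMod (p^n) × ZMod (p^n) => w.1 * w.2 = s ∧ IsUnit w.1))
      ((Finset.univ).filter (fun w : ZMod (p^n) × ZMod (p^n) => w.1 * w.2 = s ∧ IsUnit w.2)) := by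
    rw [Finset.disjoint_filter]
    rintro w _ ⟨heq, hu1⟩ ⟨_, hu2⟩
    exact hs (heq ▸ hu1.mul hu2)
  rw [hsplit, Finset.card_union_of_disjoint hdisj, countFirstUnit hp hn s,
    countSecondUnit hp hn s]
  omega
end aux3

section aux4
variable {p n : ℕ}

lemma fiberCount [NeZero (p^n)] (hp : p.Prime) {μ i : ℕ} (hi : i ≤ μ) (hμ : μ < n)
    (s₀ : ZMod (p^n)) (hs₀ : IsUnit s₀) (u : ZMod (p^n))
    (hd : (p : ZMod (p^n))^i ∣ u) (hnd : ¬ (p : ZMod (p^n))^(i+1) ∣ u) :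
    ((Finset.univ : Finset (ZMod (p^n))).filter
      (fun v => u * v = (p : ZMod (p^n))^μ * s₀)).card = p^i := by
  classical
  have hin : i ≤ n := le_trans hi (le_of_lt hμ)
  obtain ⟨t, ht⟩ := hd
  have htu : IsUnit t := by
    by_contra hc
    rw [unitU hp (by omega) t] at hc
    push_neg at hc
    obtain ⟨t', ht'⟩ := (dvdB hp (i := 1) (by omega) t).mpr (by simpa using hc)
    apply hnd
    refine ⟨t', ?_⟩
    rw [ht]
    rw [pow_one] at ht'
    rw [ht']
    ring
  set v₀ : ZMod (p^n) := (p : ZMod (p^n))^(μ-i) * ((htu.unit⁻¹ : (ZMod (p^n))ˣ) : ZMod (p^n)) * s₀ with hv₀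
  have huv₀ : u * v₀ = (p : ZMod (p^n))^μ * s₀ := by
    rw [ht, hv₀]
    have : (p : ZMod (p^n))^i * t * ((p : ZMod (p^n))^(μ-i)
        * ((htu.unit⁻¹ : (ZMod (p^n))ˣ) : ZMod (p^n)) * s₀)
        = ((p : ZMod (p^n))^i * (p : ZMod (p^n))^(μ-i))
          * (t * ((htu.unit⁻¹ : (ZMod (p^n))ˣ) : ZMod (p^n))) * s₀ := by ring
    rw [this, ← pow_add, IsUnit.mul_val_inv htu, mul_one]
    congr 2
    omega
  -- u * w = 0 ↔ p^(n-i) ∣ w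
  have hann : ∀ w : ZMod (p^n), u * w = 0 ↔ (p : ZMod (p^n))^(n-i) ∣ w := by
    intro w
    rw [ht]
    constructor
    · intro h
      have h1 : (p : ZMod (p^n))^i * (t * w) = 0 := by rw [← mul_assoc]; exact h
      have h2 := (annC hp hin _).mp h1
      obtain ⟨z, hz⟩ := h2
      refine ⟨((htu.unit⁻¹ : (ZMod (p^n))ˣ) : ZMod (p^n)) * z, ?_⟩
      have : ((htu.unit⁻¹ : (ZMod (p^n))ˣ) : ZMod (p^n)) * (t * w)
          = ((htu.unit⁻¹ : (ZMod (p^n))ˣ) : ZMod (p^n)) * ((p : ZMod (p^n))^(n-i) * z) := by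
        rw [hz]
      rw [← mul_assoc, IsUnit.val_inv_mul htu, one_mul] at this
      rw [this]; ring
    · rintro ⟨z, hz⟩
      rw [hz]
      have : (p : ZMod (p^n))^i * t * ((p : ZMod (p^n))^(n-i) * z)
          = ((p : ZMod (p^n))^i * (p : ZMod (p^n))^(n-i)) * (t * z) := by ring
      rw [this, ← pow_add]
      have he : i + (n - i) = n := by omega
      rw [he]
      have hpn : ((p : ZMod (p^n)))^n = 0 := by
        have h0 : ((p^n : ℕ) : ZMod (p^n)) = 0 := ZMod.natCast_self _
        push_cast at h0; exact h0
      rw [hpn, zero_mul]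
  -- bijection with the annihilator set
  have hcard : ((Finset.univ : Finset (ZMod (p^n))).filter
      (fun v => u * v = (p : ZMod (p^n))^μ * s₀)).card
      = ((Finset.univ : Finset (ZMod (p^n))).filter
        (fun w => p^(n-i) ∣ w.val)).card := by
    apply Finset.card_bij (fun v _ => v - v₀)
    · intro v hv
      simp only [Finset.mem_filter, Finset.mem_univ, true_and] at hv ⊢
      rw [← dvdB hp (Nat.sub_le n i), ← hann]
      rw [mul_sub, hv, huv₀, sub_self]
    · intro a _ b _ h
      exact sub_left_injective h
    · intro w hw
      simp only [Finset.mem_filter, Finset.mem_univ, true_and] at hw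
      refine ⟨w + v₀, ?_, by ring⟩
      simp only [Finset.mem_filter, Finset.mem_univ, true_and]
      rw [mul_add, huv₀, (hann w).mpr ((dvdB hp (Nat.sub_le n i) w).mpr hw), zero_add]
  rw [hcard, countA hp (Nat.sub_le n i)]
  congr 1
  omega

lemma noSol [NeZero (p^n)] (hp : p.Prime) {μ : ℕ} (hμ : μ < n)
    (s₀ : ZMod (p^n)) (hs₀ : IsUnit s₀) (u : ZMod (p^n))
    (hd : (p : ZMod (p^n))^(μ+1) ∣ u) :
    ((Finset.univ : Finset (ZMod (p^n))).filter
      (fun v => u * v = (p : ZMod (p^n))^μ * s₀)).card = 0 := by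
  rw [Finset.card_eq_zero, Finset.filter_eq_empty_iff]
  intro v _
  intro hv
  have h1 : (p : ZMod (p^n))^(μ+1) ∣ (p : ZMod (p^n))^μ * s₀ := by
    exact Dvd.dvd.trans (Dvd.dvd.mul_right hd v) (by rw [hv])
  have h2 : (p : ZMod (p^n))^(μ+1) ∣ (p : ZMod (p^n))^μ := by
    obtain ⟨z, hz⟩ := h1
    refine ⟨z * ((hs₀.unit⁻¹ : (ZMod (p^n))ˣ) : ZMod (p^n)), ?_⟩
    have := congrArg (fun x => x * ((hs₀.unit⁻¹ : (ZMod (p^n))ˣ) : ZMod (p^n))) hz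
    rw [mul_assoc, mul_assoc] at this
    rw [IsUnit.mul_val_inv hs₀] at this
    rw [mul_one] at this
    exact this
  have h3 := (dvdB hp (by omega) _).mp h2
  have h4 : ((p : ZMod (p^n))^μ) = ((p^μ : ℕ) : ZMod (p^n)) := by push_cast; rfl
  rw [h4, ZMod.val_natCast] at h3
  have h5 : p^μ % p^n = p^μ := Nat.mod_eq_of_lt (Nat.pow_lt_pow_right hp.one_lt hμ)
  rw [h5] at h3
  have h6 := Nat.le_of_dvd (pow_pos hp.pos μ) h3
  have h7 : p^μ < p^(μ+1) := Nat.pow_lt_pow_right hp.one_lt (by omega)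
  omega
end aux4

section aux5
variable {p n : ℕ}

lemma sumT [NeZero (p^n)] (hp : p.Prime) {μ : ℕ} (hμ : μ < n)
    (s₀ : ZMod (p^n)) (hs₀ : IsUnit s₀) :
    ∀ j k, k + j = μ + 1 →
      (∑ u ∈ (Finset.univ : Finset (ZMod (p^n))).filter
          (fun u => p^k ∣ u.val),
        ((Finset.univ : Finset (ZMod (p^n))).filter
          (fun v => u * v = (p : ZMod (p^n))^μ * s₀)).card)
        = j * (p^n - p^(n-1)) := by
  intro j
  induction j with
  | zero =>
    intro k hk
    have hk' : k = μ + 1 := by omega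
    subst hk'
    rw [Finset.sum_eq_zero, Nat.zero_mul]
    intro u hu
    rw [Finset.mem_filter] at hu
    exact noSol hp hμ s₀ hs₀ u ((dvdB hp (by omega) u).mpr hu.2)
  | succ j ih =>
    intro k hk
    have hkμ : k ≤ μ := by omega
    have hkn : k < n := by omega
    have hsplit := Finset.sum_filter_add_sum_filter_not
      ((Finset.univ : Finset (ZMod (p^n))).filter (fun u => p^k ∣ u.val))
      (fun u => p^(k+1) ∣ u.val)
      (fun u => ((Finset.univ : Finset (ZMod (p^n))).filter
          (fun v => u * v = (p : ZMod (p^n))^μ * s₀)).card)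
    have hff : (((Finset.univ : Finset (ZMod (p^n))).filter
          (fun u => p^k ∣ u.val)).filter (fun u => p^(k+1) ∣ u.val))
        = ((Finset.univ : Finset (ZMod (p^n))).filter
          (fun u => p^(k+1) ∣ u.val)) := by
      rw [Finset.filter_filter]
      apply Finset.filter_congr
      intro u _
      exact ⟨fun h => h.2, fun h => ⟨dvd_trans (pow_dvd_pow _ (by omega)) h, h⟩⟩
    have hconst : (∑ u ∈ ((Finset.univ : Finset (ZMod (p^n))).filter
          (fun u => p^k ∣ u.val)).filter
            (fun u => ¬ p^(k+1) ∣ u.val),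
        ((Finset.univ : Finset (ZMod (p^n))).filter
          (fun v => u * v = (p : ZMod (p^n))^μ * s₀)).card)
        = p^n - p^(n-1) := by
      rw [Finset.sum_congr rfl (g := fun _ => p^k) ?_]
      · rw [Finset.sum_const, smul_eq_mul]
        have hcards : (((Finset.univ : Finset (ZMod (p^n))).filter
            (fun u => p^k ∣ u.val)).filter
              (fun u => ¬ p^(k+1) ∣ u.val)).card
            = p^(n-k) - p^(n-k-1) := by
          have h1 := Finset.card_filter_add_card_filter_not
            (s := (Finset.univ : Finset (ZMod (p^n))).filter
              (fun u => p^k ∣ u.val))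
            (p := fun u => p^(k+1) ∣ u.val)
          rw [hff] at h1
          have h2 := countA (n := n) hp (i := k) (by omega)
          have h3 := countA (n := n) hp (i := k+1) (by omega)
          have h4 : n - (k+1) = n - k - 1 := by omega
          rw [h4] at h3
          omega
        rw [hcards, Nat.sub_mul]
        congr 1 <;> rw [← pow_add] <;> congr 1 <;> omega
      · intro u hu
        rw [Finset.mem_filter, Finset.mem_filter] at hu
        refine fiberCount hp hkμ hμ s₀ hs₀ u ((dvdB hp (by omega) u).mpr hu.1.2) ?_
        intro hc
        exact hu.2 ((dvdB hp (by omega) u).mp hc)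
    have hih := ih (k+1) (by omega)
    rw [hff] at hsplit
    rw [← hsplit, hih, hconst]
    ring
end aux5

section aux6
variable {p n : ℕ}

lemma countCA [NeZero (p^n)] (hp : p.Prime) {μ : ℕ} (hμ : μ < n)
    (s₀ : ZMod (p^n)) (hs₀ : IsUnit s₀) :
    ((Finset.univ : Finset (ZMod (p^n) × ZMod (p^n))).filter
      (fun w => w.1 * w.2 = (p : ZMod (p^n))^μ * s₀)).card
      = (μ+1) * (p^n - p^(n-1)) := by
  have hfib := Finset.card_eq_sum_card_fiberwise
    (f := fun w : ZMod (p^n) × ZMod (p^n) => w.1)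
    (s := (Finset.univ : Finset (ZMod (p^n) × ZMod (p^n))).filter
      (fun w => w.1 * w.2 = (p : ZMod (p^n))^μ * s₀))
    (t := (Finset.univ : Finset (ZMod (p^n))))
    (fun x _ => Finset.mem_univ _)
  rw [hfib]
  have hper : ∀ u : ZMod (p^n),
      (((Finset.univ : Finset (ZMod (p^n) × ZMod (p^n))).filter
        (fun w => w.1 * w.2 = (p : ZMod (p^n))^μ * s₀)).filter
          (fun w => w.1 = u)).card
      = ((Finset.univ : Finset (ZMod (p^n))).filter
        (fun v => u * v = (p : ZMod (p^n))^μ * s₀)).card := by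
    intro u
    apply Finset.card_bij (fun w _ => w.2)
    · intro w hw
      simp only [Finset.mem_filter, Finset.mem_univ, true_and] at hw ⊢
      rw [← hw.2]; exact hw.1
    · intro a ha b hb hab
      simp only [Finset.mem_filter, Finset.mem_univ, true_and] at ha hb
      exact Prod.ext (ha.2.trans hb.2.symm) hab
    · intro v hv
      simp only [Finset.mem_filter, Finset.mem_univ, true_and] at hv
      exact ⟨(u, v), by simp only [Finset.mem_filter, Finset.mem_univ, true_and]; exact ⟨hv, trivial⟩, rfl⟩
  rw [Finset.sum_congr rfl (fun u _ => hper u)]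
  have hsum := sumT hp hμ s₀ hs₀ (μ+1) 0 (by omega)
  rw [show ((Finset.univ : Finset (ZMod (p^n))).filter (fun u => p^0 ∣ u.val))
      = (Finset.univ : Finset (ZMod (p^n))) from
    Finset.filter_true_of_mem (fun u _ => by simp)] at hsum
  exact hsum
end aux6

lemma sqrt_lift (p : ℕ) (hp : p.Prime) (hodd : Odd p) (a : ℤ) (ha : ¬(p:ℤ) ∣ a)
    (w : ℤ) (hw : (p:ℤ) ∣ w^2 - a) : ∀ n, 1 ≤ n → ∃ e : ℤ, (p:ℤ)^n ∣ e^2 - a := by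
  have hpz : Prime (p:ℤ) := Nat.prime_iff_prime_int.mp hp
  intro n
  induction n with
  | zero => omega
  | succ n ih =>
    intro _
    by_cases hn : 1 ≤ n
    · obtain ⟨e, he⟩ := ih hn
      have hpe : ¬ (p:ℤ) ∣ e := by
        intro hc
        have h1 : (p:ℤ) ∣ e^2 - a := dvd_trans (dvd_pow_self _ (by omega)) he
        have h2 : (p:ℤ) ∣ e^2 := by
          exact Dvd.dvd.pow hc (by omega)
        exact ha (by have := dvd_sub h2 h1; simpa using this)
      have hp2 : ¬ (p:ℤ) ∣ 2 := by
        intro hc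
        have h2 := Int.le_of_dvd (by norm_num) hc
        have h3 : p ≤ 2 := by exact_mod_cast h2
        have h4 : p = 2 := by have := hp.two_le; omega
        rcases hodd with ⟨k, hk⟩; omega
      have hpe2 : ¬ (p:ℤ) ∣ 2*e := fun hc => (hpz.dvd_mul.mp hc).elim hp2 hpe
      obtain ⟨α, β, hαβ⟩ := (Prime.coprime_iff_not_dvd hpz).mpr hpe2
      obtain ⟨t, ht⟩ := he
      obtain ⟨m, hm⟩ : ∃ m, n = m + 1 := ⟨n - 1, by omega⟩
      subst hm
      refine ⟨e + (p:ℤ)^(m+1) * (-t*β), t*α + (p:ℤ)^m*(-t*β)^2, ?_⟩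
      have hpow1 : (p:ℤ)^(m+1+1) = (p:ℤ)^(m+1) * p := by ring
      have hpow2 : ((p:ℤ)^(m+1))^2 = (p:ℤ)^(m+1+1) * (p:ℤ)^m := by ring
      linear_combination ht + ((p:ℤ)^(m+1))^2*(-t*β)^2 * (0:ℤ)
        + ((p:ℤ)^(m+1) * (-t)) * hαβ + (0:ℤ)
    · have hn0 : n = 0 := by omega
      subst hn0
      exact ⟨w, by simpa using hw⟩

set_option maxHeartbeats 1000000 in
theorem padic_density_nu_mu :
    ∃ C : ℝ, 0 < C ∧ ∀ p : ℕ, p.Prime → Odd p → ∀ c d : ℤ, ¬ (p : ℤ) ∣ c * d →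
      (∃ w : ℤ, w ^ 2 ≡ 2 * d [ZMOD (p : ℤ)]) →
      ∀ μ n : ℕ, 1 ≤ μ → μ + 3 ≤ n →
        |(Set.ncard {t : ZMod (p ^ n) × ZMod (p ^ n) × ZMod (p ^ n) |
            ¬(p ∣ t.1.val ∧ p ∣ t.2.1.val) ∧
            ((c * (p : ℤ) ^ μ : ℤ) : ZMod (p ^ n)) * t.1 ^ 2 +
              (d : ZMod (p ^ n)) * t.2.1 ^ 2 = 2 * t.2.2 ^ 2} : ℝ) / (p : ℝ) ^ (2 * n) -
          (1 - 1 / (p : ℝ)) * ((μ : ℝ) * (1 - 1 / (p : ℝ)) + 1 + 1 / (p : ℝ))| ≤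
        C / (p : ℝ) ^ (n - μ - 2) := by
  refine ⟨1, one_pos, ?_⟩
  intro p hp hodd c d hcd hQR μ n hμ hn
  haveI : Fact p.Prime := ⟨hp⟩
  haveI : NeZero (p^n) := ⟨pow_ne_zero n hp.pos.ne'⟩
  have hn0 : n ≠ 0 := by omega
  have hμn : μ < n := by omega
  -- the reduction homomorphism
  set π : ZMod (p^n) →+* ZMod p := ZMod.castHom (dvd_pow_self p hn0) (ZMod p) with hπ_def
  have hbridge : ∀ w : ZMod (p^n), p ∣ w.val ↔ π w = 0 := by
    intro w
    rw [hπ_def, ZMod.castHom_apply, ← ZMod.natCast_val, ZMod.natCast_eq_zero_iff]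
  have hunit : ∀ w : ZMod (p^n), IsUnit w ↔ π w ≠ 0 := by
    intro w
    rw [unitU hp hn0 w]
    exact not_congr (hbridge w)
  -- basic divisibility facts
  have hpc : ¬ (p:ℤ) ∣ c := fun h => hcd (h.mul_right d)
  have hpd : ¬ (p:ℤ) ∣ d := fun h => hcd (h.mul_left c)
  have hpz : Prime (p:ℤ) := Nat.prime_iff_prime_int.mp hp
  have hp2 : ¬ (p:ℤ) ∣ 2 := by
    intro hc
    have h2 := Int.le_of_dvd (by norm_num) hc
    have h3 : p ≤ 2 := by exact_mod_cast h2
    have h4 : p = 2 := by have := hp.two_le; omega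
    rcases hodd with ⟨k, hk⟩; omega
  have hp2d : ¬ (p:ℤ) ∣ 2*d := fun hc => (hpz.dvd_mul.mp hc).elim hp2 hpd
  -- square root of 2d mod p^n
  obtain ⟨w, hw⟩ := hQR
  have hw' : (p:ℤ) ∣ w^2 - 2*d := by
    have h1 := hw.dvd
    have h2 := dvd_neg.mpr h1
    rw [neg_sub] at h2
    exact h2
  obtain ⟨E, hE⟩ := sqrt_lift p hp hodd (2*d) hp2d w hw' n (by omega)
  set e : ZMod (p^n) := ((E:ℤ) : ZMod (p^n)) with he_def
  have he2 : e^2 = 2 * ((d:ℤ) : ZMod (p^n)) := by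
    have h0 : (((E^2 - 2*d : ℤ)) : ZMod (p^n)) = 0 := by
      rw [ZMod.intCast_zmod_eq_zero_iff_dvd]
      push_cast
      exact hE
    push_cast at h0
    rw [he_def]
    linear_combination h0
  have hπ2 : ((2:ℤ) : ZMod p) ≠ 0 := by
    rw [Ne, ZMod.intCast_zmod_eq_zero_iff_dvd]
    exact hp2
  have hπ2' : (2 : ZMod p) ≠ 0 := by exact_mod_cast hπ2
  have hπe : π e ≠ 0 := by
    intro hc
    have h1 : (π e)^2 = ((2*d : ℤ) : ZMod p) := by
      rw [he_def, ← map_pow]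
      have : ((E:ℤ) : ZMod (p^n))^2 = ((E^2 : ℤ) : ZMod (p^n)) := by push_cast; ring
      rw [this, map_intCast, ← sub_eq_zero]
      have : ((E^2:ℤ) : ZMod p) - ((2*d:ℤ) : ZMod p) = ((E^2 - 2*d : ℤ) : ZMod p) := by
        push_cast; ring
      rw [this, ZMod.intCast_zmod_eq_zero_iff_dvd]
      exact dvd_trans (dvd_pow_self (p:ℤ) hn0) hE
    rw [hc] at h1
    have h2 : ((2*d : ℤ) : ZMod p) = 0 := by rw [← h1]; ring
    rw [ZMod.intCast_zmod_eq_zero_iff_dvd] at h2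
    exact hp2d h2
  have hue : IsUnit e := (hunit e).mpr hπe
  have hu2 : IsUnit (2 : ZMod (p^n)) := by
    rw [hunit]
    have h22 : π (2 : ZMod (p^n)) = (2 : ZMod p) := map_ofNat π 2
    rw [h22]
    exact hπ2'
  have hπp : π ((p : ZMod (p^n))) = 0 := by
    rw [map_natCast]
    exact ZMod.natCast_self p
  set cc : ZMod (p^n) := ((c:ℤ) : ZMod (p^n)) with hcc_def
  have huc : IsUnit cc := by
    rw [hunit, hcc_def, map_intCast, Ne, ZMod.intCast_zmod_eq_zero_iff_dvd]
    exact hpc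
  set aa : ZMod (p^n) := -(2 * cc) with haa_def
  have hua : IsUnit aa := (hu2.mul huc).neg
  -- decidable predicates
  classical
  -- from ncard to Finset.card
  have hsetcard : (Set.ncard {t : ZMod (p ^ n) × ZMod (p ^ n) × ZMod (p ^ n) |
      ¬(p ∣ t.1.val ∧ p ∣ t.2.1.val) ∧
      ((c * (p : ℤ) ^ μ : ℤ) : ZMod (p ^ n)) * t.1 ^ 2 +
        (d : ZMod (p ^ n)) * t.2.1 ^ 2 = 2 * t.2.2 ^ 2})
      = ((Finset.univ : Finset (ZMod (p^n) × ZMod (p^n) × ZMod (p^n))).filter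
        (fun t => ¬(p ∣ t.1.val ∧ p ∣ t.2.1.val) ∧
          ((c * (p : ℤ) ^ μ : ℤ) : ZMod (p ^ n)) * t.1 ^ 2 +
            (d : ZMod (p ^ n)) * t.2.1 ^ 2 = 2 * t.2.2 ^ 2)).card := by
    rw [Set.ncard_eq_toFinset_card', Set.toFinset_setOf]
  have hcast : ((c * (p : ℤ) ^ μ : ℤ) : ZMod (p ^ n)) = cc * (p : ZMod (p^n))^μ := by
    rw [hcc_def]; push_cast; ring
  -- the transformed count
  have hbij : ((Finset.univ : Finset (ZMod (p^n) × ZMod (p^n) × ZMod (p^n))).filter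
        (fun t => ¬(p ∣ t.1.val ∧ p ∣ t.2.1.val) ∧
          ((c * (p : ℤ) ^ μ : ℤ) : ZMod (p ^ n)) * t.1 ^ 2 +
            (d : ZMod (p ^ n)) * t.2.1 ^ 2 = 2 * t.2.2 ^ 2)).card
      = ((Finset.univ : Finset (ZMod (p^n) × ZMod (p^n) × ZMod (p^n))).filter
        (fun t => t.2.1 * t.2.2 = (p : ZMod (p^n))^μ * (aa * t.1^2) ∧
          (IsUnit t.1 ∨ IsUnit t.2.1 ∨ IsUnit t.2.2))).card := by
    apply Finset.card_bij (fun t _ => (t.1, e*t.2.1 - 2*t.2.2, e*t.2.1 + 2*t.2.2))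
    · rintro ⟨x, y, z⟩ ht
      simp only [Finset.mem_filter, Finset.mem_univ, true_and] at ht ⊢
      obtain ⟨h1, h2⟩ := ht
      rw [hcast] at h2
      constructor
      · rw [haa_def]
        linear_combination (y^2) * he2 + 2 * h2
      · by_cases hx : IsUnit x
        · exact Or.inl hx
        · right
          rw [hbridge, hbridge] at h1
          have hπx : π x = 0 := by
            by_contra hc
            exact hx ((hunit x).mpr hc)
          have hπy : π y ≠ 0 := fun hc => h1 ⟨hπx, hc⟩
          have hsum : π (e*y - 2*z) + π (e*y + 2*z) = 2 * π e * π y := by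
            rw [← map_add]
            have hrw : (e*y - 2*z) + (e*y + 2*z) = 2*e*y := by ring
            rw [hrw, map_mul, map_mul, map_ofNat]
          have hne : π (e*y - 2*z) + π (e*y + 2*z) ≠ 0 := by
            rw [hsum]
            exact mul_ne_zero (mul_ne_zero hπ2' hπe) hπy
          by_cases hU : π (e*y - 2*z) = 0
          · right
            rw [hunit]
            intro hc
            exact hne (by rw [hU, hc, add_zero])
          · left
            exact (hunit _).mpr hU
    · rintro ⟨x₁, y₁, z₁⟩ h₁ ⟨x₂, y₂, z₂⟩ h₂ heq
      simp only [Prod.mk.injEq] at heq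
      obtain ⟨hx, hA, hB⟩ := heq
      have hy : y₁ = y₂ := by
        apply (hu2.mul hue).mul_left_cancel
        linear_combination hA + hB
      have hz : z₁ = z₂ := by
        apply (hu2.mul hu2).mul_left_cancel
        linear_combination hB - hA
      simp only [Prod.mk.injEq]
      exact ⟨hx, hy, hz⟩
    · rintro ⟨x, u, v⟩ hb
      simp only [Finset.mem_filter, Finset.mem_univ, true_and] at hb
      obtain ⟨hbe, hbu⟩ := hb
      have hu2e : IsUnit (2*e) := hu2.mul hue
      have hu4 : IsUnit ((2:ZMod (p^n))*2) := hu2.mul hu2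
      set y : ZMod (p^n) := (hu2e.unit⁻¹ : (ZMod (p^n))ˣ) * (u + v) with hy_def
      set z : ZMod (p^n) := (hu4.unit⁻¹ : (ZMod (p^n))ˣ) * (v - u) with hz_def
      have hβ : (2*e) * ((hu2e.unit⁻¹ : (ZMod (p^n))ˣ) : ZMod (p^n)) = 1 :=
        IsUnit.mul_val_inv hu2e
      have hγ : ((2:ZMod (p^n))*2) * ((hu4.unit⁻¹ : (ZMod (p^n))ˣ) : ZMod (p^n)) = 1 :=
        IsUnit.mul_val_inv hu4
      have himg1 : e*y - 2*z = u := by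
        apply (hu2e.mul hu4).mul_left_cancel
        rw [hy_def, hz_def]
        linear_combination (2*2*e*(u+v)) * hβ - (2*2*e*(v-u)) * hγ
      have himg2 : e*y + 2*z = v := by
        apply (hu2e.mul hu4).mul_left_cancel
        rw [hy_def, hz_def]
        linear_combination (2*2*e*(u+v)) * hβ + (2*2*e*(v-u)) * hγ
      refine ⟨(x, y, z), ?_, ?_⟩
      · simp only [Finset.mem_filter, Finset.mem_univ, true_and]
        have heq' : (e*y - 2*z) * (e*y + 2*z) = (p : ZMod (p^n))^μ * (aa * x^2) := by
          rw [himg1, himg2]; exact hbe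
        constructor
        · -- divisibility condition
          rw [hbridge, hbridge]
          rintro ⟨hπx, hπy⟩
          have hπuv : π u * π v = 0 := by
            have := congrArg π hbe
            rw [map_mul, map_mul, map_pow, hπp] at this
            rw [this, zero_pow (by omega : μ ≠ 0), zero_mul]
          have hπsum : π u + π v = 0 := by
            rw [← himg1, ← himg2, ← map_add]
            have hrw : (e*y - 2*z) + (e*y + 2*z) = 2*e*y := by ring
            rw [hrw, map_mul, map_mul, map_ofNat, hπy, mul_zero]
          have hπu : π u = 0 := by
            have hv' : π v = - π u := by linear_combination hπsum
            rw [hv', mul_neg, neg_eq_zero] at hπuv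
            exact pow_eq_zero_iff (n := 2) (by omega) |>.mp (by rw [pow_two]; exact hπuv)
          have hπv : π v = 0 := by
            have := hπsum
            rw [hπu, zero_add] at this
            exact this
          rcases hbu with hx | hu | hv
          · exact (hunit x).mp hx hπx
          · exact (hunit u).mp hu hπu
          · exact (hunit v).mp hv hπv
        · rw [hcast]
          apply hu2.mul_left_cancel
          rw [haa_def] at heq'
          linear_combination heq' - (y^2) * he2 + (0 : ZMod (p^n))
      · simp only [Prod.mk.injEq]
        exact ⟨trivial, himg1, himg2⟩
  -- counting the transformed set
  have hcount : ((Finset.univ : Finset (ZMod (p^n) × ZMod (p^n) × ZMod (p^n))).filter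
        (fun t => t.2.1 * t.2.2 = (p : ZMod (p^n))^μ * (aa * t.1^2) ∧
          (IsUnit t.1 ∨ IsUnit t.2.1 ∨ IsUnit t.2.2))).card
      = (p^n - p^(n-1)) * ((μ+1) * (p^n - p^(n-1)))
        + p^(n-1) * (2 * (p^n - p^(n-1))) := by
    rw [Finset.card_eq_sum_card_fiberwise
      (f := fun t : ZMod (p^n) × ZMod (p^n) × ZMod (p^n) => t.1)
      (t := Finset.univ) (fun x _ => Finset.mem_univ _)]
    have hper : ∀ x : ZMod (p^n),
        (((Finset.univ : Finset (ZMod (p^n) × ZMod (p^n) × ZMod (p^n))).filter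
          (fun t => t.2.1 * t.2.2 = (p : ZMod (p^n))^μ * (aa * t.1^2) ∧
            (IsUnit t.1 ∨ IsUnit t.2.1 ∨ IsUnit t.2.2))).filter
              (fun t => t.1 = x)).card
        = ((Finset.univ : Finset (ZMod (p^n) × ZMod (p^n))).filter
          (fun w => w.1 * w.2 = (p : ZMod (p^n))^μ * (aa * x^2) ∧
            (IsUnit x ∨ IsUnit w.1 ∨ IsUnit w.2))).card := by
      intro x
      apply Finset.card_bij (fun t _ => t.2)
      · rintro ⟨x', y, z⟩ ht
        simp only [Finset.mem_filter, Finset.mem_univ, true_and] at ht ⊢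
        obtain ⟨⟨h1, h2⟩, h3⟩ := ht
        subst h3
        exact ⟨h1, h2⟩
      · rintro ⟨x₁, w₁⟩ h₁ ⟨x₂, w₂⟩ h₂ heq
        simp only [Finset.mem_filter, Finset.mem_univ, true_and] at h₁ h₂
        simp only at heq
        exact Prod.ext (h₁.2.trans h₂.2.symm) heq
      · intro w hw
        simp only [Finset.mem_filter, Finset.mem_univ, true_and] at hw
        refine ⟨(x, w), ?_, rfl⟩
        simp only [Finset.mem_filter, Finset.mem_univ, true_and]
        exact ⟨⟨hw.1, hw.2⟩, trivial⟩
    rw [Finset.sum_congr rfl (fun x _ => hper x)]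
    rw [← Finset.sum_filter_add_sum_filter_not Finset.univ (fun x : ZMod (p^n) => IsUnit x)]
    have hUnitPart : (∑ x ∈ (Finset.univ : Finset (ZMod (p^n))).filter (fun x => IsUnit x),
        ((Finset.univ : Finset (ZMod (p^n) × ZMod (p^n))).filter
          (fun w => w.1 * w.2 = (p : ZMod (p^n))^μ * (aa * x^2) ∧
            (IsUnit x ∨ IsUnit w.1 ∨ IsUnit w.2))).card)
        = (p^n - p^(n-1)) * ((μ+1) * (p^n - p^(n-1))) := by
      rw [Finset.sum_congr rfl (g := fun _ => (μ+1) * (p^n - p^(n-1))) ?_]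
      · rw [Finset.sum_const, countU hp hn0, smul_eq_mul]
      · intro x hx
        rw [Finset.mem_filter] at hx
        have hx' := hx.2
        have hfc : ((Finset.univ : Finset (ZMod (p^n) × ZMod (p^n))).filter
            (fun w => w.1 * w.2 = (p : ZMod (p^n))^μ * (aa * x^2) ∧
              (IsUnit x ∨ IsUnit w.1 ∨ IsUnit w.2)))
            = ((Finset.univ : Finset (ZMod (p^n) × ZMod (p^n))).filter
            (fun w => w.1 * w.2 = (p : ZMod (p^n))^μ * (aa * x^2))) := by
          apply Finset.filter_congr
          intro w _
          constructor
          · exact fun h => h.1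
          · exact fun h => ⟨h, Or.inl hx'⟩
        rw [hfc]
        exact countCA hp hμn (aa * x^2) (hua.mul (hx'.pow 2))
    have hNonUnitPart : (∑ x ∈ (Finset.univ : Finset (ZMod (p^n))).filter
          (fun x => ¬ IsUnit x),
        ((Finset.univ : Finset (ZMod (p^n) × ZMod (p^n))).filter
          (fun w => w.1 * w.2 = (p : ZMod (p^n))^μ * (aa * x^2) ∧
            (IsUnit x ∨ IsUnit w.1 ∨ IsUnit w.2))).card)
        = p^(n-1) * (2 * (p^n - p^(n-1))) := by
      rw [Finset.sum_congr rfl (g := fun _ => 2 * (p^n - p^(n-1))) ?_]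
      · rw [Finset.sum_const, smul_eq_mul]
        congr 1
        have h1 := Finset.card_filter_add_card_filter_not
          (s := (Finset.univ : Finset (ZMod (p^n)))) (p := fun x => IsUnit x)
        rw [countU hp hn0] at h1
        have h2 : (Finset.univ : Finset (ZMod (p^n))).card = p^n := by
          rw [Finset.card_univ, ZMod.card]
        have h3 : p^(n-1) ≤ p^n := Nat.pow_le_pow_right hp.pos (by omega)
        omega
      · intro x hx
        rw [Finset.mem_filter] at hx
        have hx' := hx.2
        have hfc : ((Finset.univ : Finset (ZMod (p^n) × ZMod (p^n))).filter
            (fun w => w.1 * w.2 = (p : ZMod (p^n))^μ * (aa * x^2) ∧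
              (IsUnit x ∨ IsUnit w.1 ∨ IsUnit w.2)))
            = ((Finset.univ : Finset (ZMod (p^n) × ZMod (p^n))).filter
            (fun w => w.1 * w.2 = (p : ZMod (p^n))^μ * (aa * x^2)
              ∧ (IsUnit w.1 ∨ IsUnit w.2))) := by
          apply Finset.filter_congr
          intro w _
          constructor
          · rintro ⟨h, hor⟩
            exact ⟨h, hor.resolve_left hx'⟩
          · rintro ⟨h, hor⟩
            exact ⟨h, Or.inr hor⟩
        rw [hfc]
        apply countCU hp hn0
        intro hU
        have := (hunit _).mp hU
        apply this
        rw [map_mul, map_pow, hπp, zero_pow (by omega : μ ≠ 0), zero_mul]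
    rw [hUnitPart, hNonUnitPart]
  rw [hsetcard, hbij, hcount]
  have hple : p^(n-1) ≤ p^n := Nat.pow_le_pow_right hp.pos (by omega)
  have hP0 : (0:ℝ) < p := by exact_mod_cast hp.pos
  have hA : ((((p^n - p^(n-1)) * ((μ+1) * (p^n - p^(n-1)))
        + p^(n-1) * (2 * (p^n - p^(n-1)))) : ℕ) : ℝ) / (p:ℝ)^(2*n)
      - (1 - 1/(p:ℝ)) * ((μ:ℝ)*(1 - 1/(p:ℝ)) + 1 + 1/(p:ℝ)) = 0 := by
    push_cast [Nat.cast_sub hple]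
    have hps : (p:ℝ)^n = (p:ℝ)^(n-1) * p := by
      conv_lhs => rw [show n = (n-1)+1 by omega]
      rw [pow_succ]
    have h2n : (p:ℝ)^(2*n) = ((p:ℝ)^n)^2 := by
      rw [show 2*n = n*2 by omega, pow_mul]
    rw [h2n, hps]
    field_simp
    ring
  rw [hA, abs_zero]
  positivity
end
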